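/- arXiv:2211.12354 — 9 statements merged into one kernel-verified Lean document; each statement's English description precedes it below -/
import Mathlib

section
/- The function g defined on the positive reals by g(x) = (x+1)·ln(1+1/x)/√(2x+1) is strictly decreasing on (0,∞). -/
/-- For `x > 0`, `g x = (x+1) * ln(1 + 1/x) / √(2x+1)` is strictly decreasing on `(0, ∞)`. -/
theorem g_strictAntiOn :
    StrictAntiOn (fun x : ℝ => (x + 1) * Real.log (1 + 1 / x) / Real.sqrt (2 * x + 1))
      (Set.Ioi (0 : ℝ)) := by
  have key : ∀ x : ℝ, 0 < x → ∃ d : ℝ, d < 0 ∧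
      HasDerivAt (fun x : ℝ => (x + 1) * Real.log (1 + 1 / x) / Real.sqrt (2 * x + 1)) d x := by
    intro x hx
    have hx0 : x ≠ 0 := hx.ne'
    have hu : (0:ℝ) < 1 + 1 / x := by positivity
    have hs : (0:ℝ) < Real.sqrt (2 * x + 1) := Real.sqrt_pos.mpr (by linarith)
    set s := Real.sqrt (2 * x + 1) with hs_def
    set L := Real.log (1 + 1 / x) with hL_def
    have hinv : HasDerivAt (fun y : ℝ => 1 + 1 / y) (-(x^2)⁻¹) x := by
      simpa using (hasDerivAt_inv hx0).const_add 1
    have hlog : HasDerivAt (fun y : ℝ => Real.log (1 + 1 / y)) (-(x^2)⁻¹ / (1 + 1/x)) x :=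
      hinv.log hu.ne'
    have hN : HasDerivAt (fun y : ℝ => (y + 1) * Real.log (1 + 1 / y))
        (1 * L + (x + 1) * (-(x^2)⁻¹ / (1 + 1/x))) x :=
      ((hasDerivAt_id x).add_const 1).mul hlog
    have hden : HasDerivAt (fun y : ℝ => Real.sqrt (2 * y + 1)) (1 / (2 * s) * 2) x := by
      have h1 : HasDerivAt (fun y : ℝ => 2 * y + 1) 2 x := by
        simpa using ((hasDerivAt_id x).const_mul 2).add_const 1
      exact (Real.hasDerivAt_sqrt (by positivity : (2*x+1 : ℝ) ≠ 0)).comp x h1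
    have hg := hN.div hden hs.ne'
    refine ⟨_, ?_, hg⟩
    apply div_neg_of_neg_of_pos _ (by positivity)
    have hs2 : s * s = 2 * x + 1 := Real.mul_self_sqrt (by linarith)
    have hLle : L ≤ 1 / x := by
      rw [hL_def]
      have := Real.log_le_sub_one_of_pos hu
      linarith
    have hsimp : (1 * L + (x + 1) * (-(x^2)⁻¹ / (1 + 1/x))) = L - 1/x := by
      field_simp
      ring
    rw [hsimp]
    have hmul : ((L - 1/x) * s - (x + 1) * L * (1 / (2 * s) * 2)) * s
        = x * L - 2 - 1/x := by
      field_simp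
      linear_combination (L * x - 1) * hs2
    have hx1 : x * (1 / x) = 1 := by field_simp
    have hnum : x * L - 2 - 1 / x < 0 := by
      have h2 : x * L ≤ x * (1 / x) := mul_le_mul_of_nonneg_left hLle hx.le
      have h3 : (0:ℝ) < 1 / x := one_div_pos.mpr hx
      linarith [hx1 ▸ h2]
    rw [← hL_def, ← hs_def]
    exact neg_of_mul_neg_left (hmul ▸ hnum) hs.le
  exact strictAntiOn_of_deriv_neg (convex_Ioi 0)
    (fun x hx => ((key x hx).choose_spec.2).continuousAt.continuousWithinAt)
    (by
      intro x hx
      rw [interior_Ioi] at hx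
      obtain ⟨d, hd, hder⟩ := key x hx
      rw [hder.deriv]
      exact hd)
end

section
/- Let α ≥ 0 and define f_α(x) = ln(1+1/x) − α·√(2x+1)/(x+1) for x > 0. Then f_α is decreasing on the set S_α = {x : x > 0 and g(x) ≥ α}, where g(x) = (x+1)·ln(1+1/x)/√(2x+1); that is, for all x, y ∈ S_α with x ≤ y one has f_α(y) ≤ f_α(x). -/
private lemma hasDerivAt_aux (α z : ℝ) (hz : 0 < z) :
    HasDerivAt (fun t => Real.log (1 + 1 / t) - α * Real.sqrt (2 * t + 1) / (t + 1))
      ((-(z ^ 2)⁻¹) / (1 + 1 / z) -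
        (α * (1 / (2 * Real.sqrt (2 * z + 1)) * 2) * (z + 1) -
          α * Real.sqrt (2 * z + 1) * 1) / ((z + 1) ^ 2)) z := by
  have hzne : z ≠ 0 := hz.ne'
  have h1z : (0:ℝ) < 1 + 1 / z := by positivity
  have h2z : (0:ℝ) < 2 * z + 1 := by linarith
  have hz1 : (0:ℝ) < z + 1 := by linarith
  have h1 : HasDerivAt (fun t : ℝ => 1 + 1 / t) (-(z ^ 2)⁻¹) z := by
    simpa only [one_div] using (hasDerivAt_inv hzne).const_add 1
  have hlog : HasDerivAt (fun t : ℝ => Real.log (1 + 1 / t))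
      ((-(z ^ 2)⁻¹) / (1 + 1 / z)) z := h1.log h1z.ne'
  have hinner : HasDerivAt (fun t : ℝ => 2 * t + 1) 2 z := by
    simpa using ((hasDerivAt_id z).const_mul 2).add_const 1
  have hsqrt : HasDerivAt (fun t : ℝ => Real.sqrt (2 * t + 1))
      (1 / (2 * Real.sqrt (2 * z + 1)) * 2) z :=
    (Real.hasDerivAt_sqrt h2z.ne').comp z hinner
  have hnum : HasDerivAt (fun t : ℝ => α * Real.sqrt (2 * t + 1))
      (α * (1 / (2 * Real.sqrt (2 * z + 1)) * 2)) z := hsqrt.const_mul α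
  have hden : HasDerivAt (fun t : ℝ => t + 1) 1 z := (hasDerivAt_id z).add_const 1
  exact hlog.sub (hnum.div hden hz1.ne')

set_option maxHeartbeats 1000000 in
/-- For `α ≥ 0`, `f_α(x) = ln(1+1/x) − α √(2x+1)/(x+1)` is decreasing on
`S_α = {x | x > 0 ∧ g x ≥ α}` where `g x = (x+1) ln(1+1/x)/√(2x+1)`. -/
theorem f_antitoneOn_feasible (α : ℝ) (hα : 0 ≤ α) :
    ∀ x ∈ {x : ℝ | 0 < x ∧ α ≤ (x + 1) * Real.log (1 + 1 / x) / Real.sqrt (2 * x + 1)},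
    ∀ y ∈ {x : ℝ | 0 < x ∧ α ≤ (x + 1) * Real.log (1 + 1 / x) / Real.sqrt (2 * x + 1)},
      x ≤ y →
      Real.log (1 + 1 / y) - α * Real.sqrt (2 * y + 1) / (y + 1) ≤
        Real.log (1 + 1 / x) - α * Real.sqrt (2 * x + 1) / (x + 1) := by
  rintro x ⟨hx, hgx⟩ y ⟨hy, hgy⟩ hxy
  set F : ℝ → ℝ := fun t => Real.log (1 + 1 / t) - α * Real.sqrt (2 * t + 1) / (t + 1) with hF
  -- key bound at each point z with 0 < z ≤ y : α * z^2 ≤ √(2z+1) * (z+1)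
  have key : ∀ z : ℝ, 0 < z → z ≤ y → α * z ^ 2 ≤ Real.sqrt (2 * z + 1) * (z + 1) := by
    intro z hz hzy
    have h2y : (0:ℝ) < 2 * y + 1 := by linarith
    have h2z : (0:ℝ) < 2 * z + 1 := by linarith
    have hsy : 0 < Real.sqrt (2 * y + 1) := Real.sqrt_pos.mpr h2y
    have hsz : 0 < Real.sqrt (2 * z + 1) := Real.sqrt_pos.mpr h2z
    have hsy2 : Real.sqrt (2 * y + 1) ^ 2 = 2 * y + 1 := Real.sq_sqrt h2y.le
    have hsz2 : Real.sqrt (2 * z + 1) ^ 2 = 2 * z + 1 := Real.sq_sqrt h2z.le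
    -- log(1+1/y) ≤ 1/y
    have hlog : Real.log (1 + 1 / y) ≤ 1 / y := by
      have := Real.log_le_sub_one_of_pos (show (0:ℝ) < 1 + 1 / y by positivity)
      linarith
    -- α ≤ (y+1) * √(2y+1) / y^2
    have hαy : α ≤ (y + 1) * Real.sqrt (2 * y + 1) / y ^ 2 := by
      refine le_trans hgy ?_
      rw [div_le_div_iff₀ hsy (by positivity)]
      have h1 : (y + 1) * Real.log (1 + 1 / y) * y ^ 2 ≤ (y + 1) * (1 / y) * y ^ 2 := by
        have : Real.log (1 + 1 / y) * y ^ 2 ≤ (1 / y) * y ^ 2 := by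
          apply mul_le_mul_of_nonneg_right hlog (by positivity)
        nlinarith [this]
      have h2 : (y + 1) * (1 / y) * y ^ 2 ≤ (y + 1) * Real.sqrt (2 * y + 1) * Real.sqrt (2 * y + 1) := by
        have hy1 : (y + 1) * (1 / y) * y ^ 2 = (y + 1) * y := by field_simp
        rw [hy1]
        nlinarith [hsy2, hsy]
      linarith
    -- z * √(2y+1) ≤ y * √(2z+1)
    have hswap : z * Real.sqrt (2 * y + 1) ≤ y * Real.sqrt (2 * z + 1) := by
      have e1 : z * Real.sqrt (2 * y + 1) = Real.sqrt (z ^ 2 * (2 * y + 1)) := by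
        rw [Real.sqrt_mul (sq_nonneg z), Real.sqrt_sq hz.le]
      have e2 : y * Real.sqrt (2 * z + 1) = Real.sqrt (y ^ 2 * (2 * z + 1)) := by
        rw [Real.sqrt_mul (sq_nonneg y), Real.sqrt_sq hy.le]
      rw [e1, e2]
      apply Real.sqrt_le_sqrt
      have hA : 0 ≤ 2 * z * y * (y - z) :=
        mul_nonneg (by positivity) (by linarith)
      have hB : z ^ 2 ≤ y ^ 2 := by nlinarith
      nlinarith [hA, hB]
    -- (y+1)*√(2y+1)/y^2 ≤ (z+1)*√(2z+1)/z^2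
    have hmono : (y + 1) * Real.sqrt (2 * y + 1) / y ^ 2 ≤ (z + 1) * Real.sqrt (2 * z + 1) / z ^ 2 := by
      rw [div_le_div_iff₀ (by positivity) (by positivity)]
      have h3 : z * (y + 1) ≤ y * (z + 1) := by nlinarith
      have h4 : (z * Real.sqrt (2 * y + 1)) * (z * (y + 1)) ≤
          (y * Real.sqrt (2 * z + 1)) * (y * (z + 1)) := by
        apply mul_le_mul hswap (by nlinarith) (by positivity) (by positivity)
      nlinarith [h4]
    have : α ≤ (z + 1) * Real.sqrt (2 * z + 1) / z ^ 2 := le_trans hαy hmono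
    rw [le_div_iff₀ (by positivity)] at this
    nlinarith [this]
  -- apply the derivative criterion on [x, y]
  have hanti : AntitoneOn F (Set.Icc x y) := by
    apply antitoneOn_of_deriv_nonpos (convex_Icc x y)
    · intro z hz
      exact (hasDerivAt_aux α z (lt_of_lt_of_le hx hz.1)).continuousAt.continuousWithinAt
    · intro z hz
      rw [interior_Icc] at hz
      exact (hasDerivAt_aux α z (lt_trans hx hz.1)).differentiableAt.differentiableWithinAt
    · intro z hz
      rw [interior_Icc] at hz
      have hz0 : 0 < z := lt_trans hx hz.1
      rw [(hasDerivAt_aux α z hz0).deriv]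
      have hkey := key z hz0 hz.2.le
      have h2z : (0:ℝ) < 2 * z + 1 := by linarith
      have hs : 0 < Real.sqrt (2 * z + 1) := Real.sqrt_pos.mpr h2z
      have hs2 : Real.sqrt (2 * z + 1) ^ 2 = 2 * z + 1 := Real.sq_sqrt h2z.le
      have hz1 : (0:ℝ) < z + 1 := by linarith
      set s := Real.sqrt (2 * z + 1) with hsdef
      have e1 : (-(z ^ 2)⁻¹) / (1 + 1 / z) = -(1 / (z * (z + 1))) := by
        field_simp
      have e2 : (α * (1 / (2 * s) * 2) * (z + 1) - α * s * 1) / ((z + 1) ^ 2)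
          = -(α * z / (s * (z + 1) ^ 2)) := by
        have hinv : s * s⁻¹ = 1 := mul_inv_cancel₀ hs.ne'
        rw [← div_div (α * z) s]
        linear_combination (-α * ((z + 1) ^ 2)⁻¹ * s⁻¹) * hs2 + (α * ((z + 1) ^ 2)⁻¹ * s) * hinv
      rw [e1, e2]
      have : α * z / (s * (z + 1) ^ 2) ≤ 1 / (z * (z + 1)) := by
        rw [div_le_div_iff₀ (by positivity) (by positivity)]
        nlinarith [mul_le_mul_of_nonneg_right hkey hz1.le]
      linarith
  exact hanti ⟨le_refl x, hxy⟩ ⟨hxy, le_refl y⟩ hxy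
end

section
/- Let α ≥ 0 and define f_α(x) = ln(1+1/x) − α·√(2x+1)/(x+1) for x > 0. Then the set S_α = {x : x > 0 and g(x) ≥ α}, where g(x) = (x+1)·ln(1+1/x)/√(2x+1), is a convex subset of ℝ, and f_α is convex on S_α: for all x, y ∈ S_α and all t ∈ [0,1], f_α(t·x + (1−t)·y) ≤ t·f_α(x) + (1−t)·f_α(y). -/
open Real Set Filter Topology

namespace FConvAux

lemma sqrt_pos' {x : ℝ} (hx : 0 < x) : 0 < Real.sqrt (2*x+1) := Real.sqrt_pos.2 (by linarith)
lemma sq_sqrt' {x : ℝ} (hx : 0 < x) : Real.sqrt (2*x+1)^2 = 2*x+1 := Real.sq_sqrt (by linarith)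

lemma hasDerivAt_s {x : ℝ} (hx : 0 < x) :
    HasDerivAt (fun x => Real.sqrt (2*x+1)) (1/Real.sqrt (2*x+1)) x := by
  have h1 : HasDerivAt (fun x : ℝ => 2*x+1) 2 x := by
    simpa using ((hasDerivAt_id x).const_mul 2).add_const 1
  have h2 := (Real.hasDerivAt_sqrt (x := 2*x+1) (by positivity)).comp x h1
  refine h2.congr_deriv ?_
  field_simp

lemma hasDerivAt_L {x : ℝ} (hx : 0 < x) :
    HasDerivAt (fun x => Real.log (1 + 1/x)) (-(1/(x*(x+1)))) x := by
  have h1 : HasDerivAt (fun x : ℝ => 1 + 1/x) (-(1/x^2)) x := by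
    simpa [one_div] using ((hasDerivAt_inv (ne_of_gt hx)).const_add 1)
  have hne : (1 : ℝ) + 1/x ≠ 0 := by positivity
  have h2 := h1.log hne
  refine h2.congr_deriv ?_
  field_simp

lemma hasDerivAt_phi {x : ℝ} (hx : 0 < x) :
    HasDerivAt (fun x => Real.sqrt (2*x+1)/(x+1)) (-x/(Real.sqrt (2*x+1)*(x+1)^2)) x := by
  have hs := sqrt_pos' hx
  have hsq := sq_sqrt' hx
  have h := (hasDerivAt_s hx).div ((hasDerivAt_id x).add_const 1) (by positivity)
  refine h.congr_deriv ?_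
  simp only [id]
  set s := Real.sqrt (2*x+1) with hs'
  field_simp
  rw [hsq]; ring

lemma hasDerivAt_phi' {x : ℝ} (hx : 0 < x) :
    HasDerivAt (fun x => -x/(Real.sqrt (2*x+1)*(x+1)^2))
      ((3*x^2-1)/(Real.sqrt (2*x+1)*(2*x+1)*(x+1)^3)) x := by
  have hs := sqrt_pos' hx
  have hsq := sq_sqrt' hx
  have h2 : HasDerivAt (fun x : ℝ => (x+1)^2) (2*(x+1)) x := by
    have := (((hasDerivAt_id x).add_const 1).fun_pow 2)
    simpa using this
  have hden : HasDerivAt (fun x => Real.sqrt (2*x+1)*(x+1)^2)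
      (1/Real.sqrt (2*x+1)*(x+1)^2 + Real.sqrt (2*x+1)*(2*(x+1))) x :=
    (hasDerivAt_s hx).mul h2
  have hnum : HasDerivAt (fun x : ℝ => -x) (-1) x := (hasDerivAt_id x).neg
  have h := hnum.div hden (by positivity)
  refine h.congr_deriv ?_
  set s := Real.sqrt (2*x+1) with hs'
  field_simp
  rw [hsq]; ring

noncomputable def g (x : ℝ) : ℝ := (x+1) * Real.log (1+1/x) / Real.sqrt (2*x+1)
noncomputable def g' (x : ℝ) : ℝ :=
  (x * Real.log (1+1/x) - (2*x+1)/x) / (Real.sqrt (2*x+1) * (2*x+1))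

lemma hasDerivAt_g {x : ℝ} (hx : 0 < x) : HasDerivAt g (g' x) x := by
  have hs := sqrt_pos' hx
  have hsq := sq_sqrt' hx
  have hN : HasDerivAt (fun x => (x+1) * Real.log (1+1/x))
      (1 * Real.log (1+1/x) + (x+1) * -(1/(x*(x+1)))) x :=
    ((hasDerivAt_id x).add_const 1).mul (hasDerivAt_L hx)
  have h := hN.div (hasDerivAt_s hx) (ne_of_gt hs)
  refine h.congr_deriv ?_
  unfold g'
  set L := Real.log (1+1/x) with hL
  set s := Real.sqrt (2*x+1) with hs'
  field_simp
  rw [hsq]; ring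

lemma log_le {x : ℝ} (hx : 0 < x) : Real.log (1+1/x) ≤ 1/x := by
  have := Real.log_le_sub_one_of_pos (show (0:ℝ) < 1 + 1/x by positivity)
  linarith

lemma xlog_le {x : ℝ} (hx : 0 < x) : x * Real.log (1+1/x) ≤ 1 := by
  have h := mul_le_mul_of_nonneg_left (log_le hx) hx.le
  rw [mul_one_div, div_self hx.ne'] at h
  linarith

lemma g'_neg {x : ℝ} (hx : 0 < x) : g' x < 0 := by
  have hs := sqrt_pos' hx
  have hnum : x * Real.log (1+1/x) - (2*x+1)/x < 0 := by
    have h2 : (1:ℝ) < (2*x+1)/x := by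
      rw [lt_div_iff₀ hx]; linarith
    have := xlog_le hx
    linarith
  exact div_neg_of_neg_of_pos hnum (by positivity)

lemma g_anti : StrictAntiOn g (Ioi 0) := by
  apply strictAntiOn_of_deriv_neg (convex_Ioi 0)
  · exact fun x hx => ((hasDerivAt_g hx).continuousAt).continuousWithinAt
  · intro x hx
    rw [interior_Ioi] at hx
    rw [(hasDerivAt_g hx).deriv]
    exact g'_neg hx

lemma convex_S (α : ℝ) : Convex ℝ {x : ℝ | 0 < x ∧ α ≤ g x} := by
  intro x hx y hy a b ha hb hab
  obtain ⟨hx0, hxg⟩ := hx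
  obtain ⟨hy0, hyg⟩ := hy
  simp only [smul_eq_mul]
  have hz0 : 0 < a * x + b * y := by
    have hmin : 0 < min x y := lt_min hx0 hy0
    have hle : min x y ≤ a * x + b * y := by
      calc min x y = a * min x y + b * min x y := by rw [← add_mul, hab, one_mul]
        _ ≤ a * x + b * y := by gcongr <;> [exact min_le_left x y; exact min_le_right x y]
    linarith
  refine ⟨hz0, ?_⟩
  have hm0 : (0:ℝ) < max x y := lt_max_of_lt_left hx0
  have hzm : a * x + b * y ≤ max x y := by
    calc a * x + b * y ≤ a * max x y + b * max x y := by
          gcongr <;> [exact le_max_left x y; exact le_max_right x y]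
      _ = max x y := by rw [← add_mul, hab, one_mul]
  have h1 : g (max x y) ≤ g (a * x + b * y) := g_anti.antitoneOn hz0 hm0 hzm
  have h2 : α ≤ g (max x y) := by
    rcases max_cases x y with ⟨h, _⟩ | ⟨h, _⟩ <;> rw [h] <;> assumption
  linarith

noncomputable def f (α x : ℝ) : ℝ := Real.log (1 + 1/x) - α * Real.sqrt (2*x+1) / (x+1)
noncomputable def f' (α x : ℝ) : ℝ :=
  -(1/(x*(x+1))) - α * (-x / (Real.sqrt (2*x+1)*(x+1)^2))
noncomputable def f'' (α x : ℝ) : ℝ :=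
  (2*x+1)/(x^2*(x+1)^2) - α * ((3*x^2-1)/(Real.sqrt (2*x+1)*(2*x+1)*(x+1)^3))

lemma hasDerivAt_f {α x : ℝ} (hx : 0 < x) : HasDerivAt (f α) (f' α x) x := by
  have h := (hasDerivAt_L hx).sub ((hasDerivAt_phi hx).const_mul α)
  have hfun : f α = fun x => Real.log (1 + 1/x) - α * (Real.sqrt (2*x+1)/(x+1)) := by
    funext y; simp [f, mul_div_assoc]
  rw [hfun]; exact h

lemma hasDerivAt_f' {α x : ℝ} (hx : 0 < x) : HasDerivAt (f' α) (f'' α x) x := by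
  have h1 : HasDerivAt (fun x : ℝ => x*(x+1)) (2*x+1) x := by
    have := (hasDerivAt_id x).mul ((hasDerivAt_id x).add_const 1)
    refine this.congr_deriv ?_
    simp [id_eq]
    ring
  have h2 : HasDerivAt (fun x : ℝ => -(1/(x*(x+1)))) ((2*x+1)/(x^2*(x+1)^2)) x := by
    simp only [one_div]
    have h3 := (h1.inv (by positivity)).neg
    refine h3.congr_deriv ?_
    rw [neg_div, neg_neg, mul_pow]
  have h := h2.sub ((hasDerivAt_phi' hx).const_mul α)
  exact h

lemma f''_nonneg {α x : ℝ} (hα : 0 ≤ α) (hx : 0 < x) (hg : α ≤ g x) : 0 ≤ f'' α x := by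
  have hs := sqrt_pos' hx
  have hsq := sq_sqrt' hx
  have hL0 : 0 ≤ Real.log (1+1/x) := Real.log_nonneg (by
    have : 0 < 1/x := by positivity
    linarith)
  unfold f''
  rw [sub_nonneg]
  rcases le_or_gt (3*x^2-1) 0 with h3 | h3
  · have hB : (3*x^2-1)/(Real.sqrt (2*x+1)*(2*x+1)*(x+1)^3) ≤ 0 :=
      div_nonpos_of_nonpos_of_nonneg h3 (by positivity)
    have hA : (0:ℝ) ≤ (2*x+1)/(x^2*(x+1)^2) := by positivity
    nlinarith [mul_nonpos_of_nonneg_of_nonpos hα hB]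
  · have hBpos : (0:ℝ) ≤ (3*x^2-1)/(Real.sqrt (2*x+1)*(2*x+1)*(x+1)^3) :=
      div_nonneg h3.le (by positivity)
    have key : Real.log (1+1/x) * (3*x^2-1) * x^2 ≤ (2*x+1)^3 := by
      have hxL := xlog_le hx
      nlinarith [mul_le_mul_of_nonneg_right hxL
        (show (0:ℝ) ≤ x*(3*x^2-1) by nlinarith)]
    calc α * ((3*x^2-1)/(Real.sqrt (2*x+1)*(2*x+1)*(x+1)^3))
        ≤ g x * ((3*x^2-1)/(Real.sqrt (2*x+1)*(2*x+1)*(x+1)^3)) :=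
          mul_le_mul_of_nonneg_right hg hBpos
      _ ≤ (2*x+1)/(x^2*(x+1)^2) := by
          unfold g
          rw [div_mul_div_comm, div_le_div_iff₀ (by positivity) (by positivity)]
          have hR : (2*x+1)*(Real.sqrt (2*x+1)*(Real.sqrt (2*x+1)*(2*x+1)*(x+1)^3))
              = (2*x+1)^3*(x+1)^3 := by
            linear_combination ((2*x+1)^2*(x+1)^3) * hsq
          rw [hR]
          nlinarith [mul_le_mul_of_nonneg_right key
            (show (0:ℝ) ≤ (x+1)^3 by positivity)]

lemma convexOn_f (α : ℝ) (hα : 0 ≤ α) :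
    ConvexOn ℝ {x : ℝ | 0 < x ∧ α ≤ g x} (f α) := by
  set S := {x : ℝ | 0 < x ∧ α ≤ g x} with hS
  have hSsub : S ⊆ Ioi 0 := fun x hx => hx.1
  apply convexOn_of_deriv2_nonneg (convex_S α)
  · exact fun x hx => (hasDerivAt_f hx.1).continuousAt.continuousWithinAt
  · intro x hx
    have hx0 : 0 < x := (interior_subset hx : x ∈ S).1
    exact (hasDerivAt_f hx0).differentiableAt.differentiableWithinAt
  · intro x hx
    have hx0 : 0 < x := (interior_subset hx : x ∈ S).1
    have hev : deriv (f α) =ᶠ[𝓝 x] f' α := by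
      filter_upwards [Ioi_mem_nhds hx0] with y hy
      exact (hasDerivAt_f hy).deriv
    exact ((hev.differentiableAt_iff).2 (hasDerivAt_f' hx0).differentiableAt).differentiableWithinAt
  · intro x hx
    have hxS : x ∈ S := interior_subset hx
    have hx0 : 0 < x := hxS.1
    have hev : deriv (f α) =ᶠ[𝓝 x] f' α := by
      filter_upwards [Ioi_mem_nhds hx0] with y hy
      exact (hasDerivAt_f hy).deriv
    have h2 : deriv^[2] (f α) x = f'' α x := by
      show deriv (deriv (f α)) x = f'' α x
      rw [hev.deriv_eq]
      exact (hasDerivAt_f' hx0).deriv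
    rw [h2]
    exact f''_nonneg hα hx0 hxS.2

end FConvAux

/-- For `α ≥ 0`, the set `S_α = {x | x > 0 ∧ g x ≥ α}` is convex and
`f_α(x) = ln(1+1/x) − α √(2x+1)/(x+1)` is convex on `S_α`. -/
theorem f_convexOn_feasible (α : ℝ) (hα : 0 ≤ α) :
    Convex ℝ {x : ℝ | 0 < x ∧ α ≤ (x + 1) * Real.log (1 + 1 / x) / Real.sqrt (2 * x + 1)} ∧
    ∀ x ∈ {x : ℝ | 0 < x ∧ α ≤ (x + 1) * Real.log (1 + 1 / x) / Real.sqrt (2 * x + 1)},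
    ∀ y ∈ {x : ℝ | 0 < x ∧ α ≤ (x + 1) * Real.log (1 + 1 / x) / Real.sqrt (2 * x + 1)},
    ∀ t : ℝ, 0 ≤ t → t ≤ 1 →
      Real.log (1 + 1 / (t * x + (1 - t) * y)) -
          α * Real.sqrt (2 * (t * x + (1 - t) * y) + 1) / ((t * x + (1 - t) * y) + 1) ≤
        t * (Real.log (1 + 1 / x) - α * Real.sqrt (2 * x + 1) / (x + 1)) +
          (1 - t) * (Real.log (1 + 1 / y) - α * Real.sqrt (2 * y + 1) / (y + 1)) := by
  constructor
  · exact FConvAux.convex_S α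
  · intro x hx y hy t ht0 ht1
    have h := (FConvAux.convexOn_f α hα).2 hx hy ht0 (by linarith : (0:ℝ) ≤ 1 - t)
      (by ring : t + (1 - t) = 1)
    simpa [FConvAux.f, smul_eq_mul] using h
end

section
/- Define G(x) = √(x² + 2x)/(1+x) for x > 0 and let c₀ = (√17 − 3)/4. For any fixed x̂ ≥ c₀, set ρ̃ = x̂/√(x̂² + 2x̂) − x̂·√(x̂² + 2x̂)/(1+x̂)² and δ̃ = √(1 − 1/(1+x̂)²) − ρ̃·ln(x̂). Then for every x ≥ c₀ one has G(x) ≤ ρ̃·ln(x) + δ̃, with equality when x = x̂. -/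
open Real Set

private lemma c0_ge : (1:ℝ)/4 ≤ (Real.sqrt 17 - 3) / 4 := by
  have h4 : (4:ℝ) ≤ Real.sqrt 17 := by
    nlinarith [Real.sq_sqrt (by norm_num : (17:ℝ) ≥ 0), Real.sqrt_nonneg (17:ℝ)]
  linarith

private lemma c0_quad {x : ℝ} (hx : (Real.sqrt 17 - 3) / 4 ≤ x) :
    0 ≤ 2 * x ^ 2 + 3 * x - 1 := by
  have h17 : Real.sqrt 17 ^ 2 = 17 := Real.sq_sqrt (by norm_num)
  have h0 : (0:ℝ) ≤ Real.sqrt 17 := Real.sqrt_nonneg 17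
  nlinarith [c0_ge, hx, h17, h0]

/-- The key antitonicity: `φ(x) = x / (√(x²+2x) (1+x)²)` is antitone on `[c₀, ∞)`. -/
private lemma phi_anti {a b : ℝ} (ha : (Real.sqrt 17 - 3) / 4 ≤ a) (hab : a ≤ b) :
    b / (Real.sqrt (b ^ 2 + 2 * b) * (1 + b) ^ 2) ≤
      a / (Real.sqrt (a ^ 2 + 2 * a) * (1 + a) ^ 2) := by
  have ha0 : (0:ℝ) < a := lt_of_lt_of_le (by linarith [c0_ge]) ha
  have hb0 : (0:ℝ) < b := lt_of_lt_of_le ha0 hab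
  have hqa : 0 < a ^ 2 + 2 * a := by nlinarith
  have hqb : 0 < b ^ 2 + 2 * b := by nlinarith
  have hsa : 0 < Real.sqrt (a ^ 2 + 2 * a) := Real.sqrt_pos.2 hqa
  have hsb : 0 < Real.sqrt (b ^ 2 + 2 * b) := Real.sqrt_pos.2 hqb
  have hsa2 : Real.sqrt (a ^ 2 + 2 * a) ^ 2 = a ^ 2 + 2 * a := Real.sq_sqrt hqa.le
  have hsb2 : Real.sqrt (b ^ 2 + 2 * b) ^ 2 = b ^ 2 + 2 * b := Real.sq_sqrt hqb.le
  have h1a : (0:ℝ) < 1 + a := by linarith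
  have h1b : (0:ℝ) < 1 + b := by linarith
  rw [div_le_div_iff₀ (by positivity) (by positivity)]
  -- goal: b * (√(a²+2a) (1+a)²) ≤ a * (√(b²+2b) (1+b)²)
  have hquad : 0 ≤ 2 * a ^ 2 + 3 * a - 1 := c0_quad ha
  have hsq : (b * (Real.sqrt (a ^ 2 + 2 * a) * (1 + a) ^ 2)) ^ 2 ≤
      (a * (Real.sqrt (b ^ 2 + 2 * b) * (1 + b) ^ 2)) ^ 2 := by
    have hL : (b * (Real.sqrt (a ^ 2 + 2 * a) * (1 + a) ^ 2)) ^ 2 =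
        b ^ 2 * ((a ^ 2 + 2 * a) * (1 + a) ^ 4) := by
      rw [mul_pow, mul_pow]
      rw [hsa2]; ring
    have hR : (a * (Real.sqrt (b ^ 2 + 2 * b) * (1 + b) ^ 2)) ^ 2 =
        a ^ 2 * ((b ^ 2 + 2 * b) * (1 + b) ^ 4) := by
      rw [mul_pow, mul_pow]
      rw [hsb2]; ring
    rw [hL, hR]
    have hint1 : 0 ≤ a * b * (b - a) * ((2 * a ^ 2 + 3 * a - 1) * (2 * (a + 1) ^ 3)) := by
      have : (0:ℝ) ≤ 2 * (a + 1) ^ 3 := by positivity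
      have h1 : (0:ℝ) ≤ a * b * (b - a) := by
        apply mul_nonneg (by positivity) (by linarith)
      exact mul_nonneg h1 (mul_nonneg hquad this)
    have hint2 : 0 ≤ a * b * (b - a) ^ 2 *
        (a * (16 + 14 * b + 6 * b ^ 2 + b ^ 3) + a ^ 2 * (28 + 12 * b + 2 * b ^ 2) +
          a ^ 3 * (18 + 3 * b) + 4 * a ^ 4) := by positivity
    nlinarith [hint1, hint2]
  have h := Real.sqrt_le_sqrt hsq
  rwa [Real.sqrt_sq (by positivity), Real.sqrt_sq (by positivity)] at h

/-- Derivative of `G`. -/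
private lemma G_hasDeriv {x : ℝ} (hx : 0 < x) :
    HasDerivAt (fun y : ℝ => Real.sqrt (y ^ 2 + 2 * y) / (1 + y))
      (1 / (Real.sqrt (x ^ 2 + 2 * x) * (1 + x) ^ 2)) x := by
  have hq : 0 < x ^ 2 + 2 * x := by nlinarith
  have hs : 0 < Real.sqrt (x ^ 2 + 2 * x) := Real.sqrt_pos.2 hq
  have hs2 : Real.sqrt (x ^ 2 + 2 * x) ^ 2 = x ^ 2 + 2 * x := Real.sq_sqrt hq.le
  have h1x : (0:ℝ) < 1 + x := by linarith
  have hpoly : HasDerivAt (fun y : ℝ => y ^ 2 + 2 * y) (2 * x + 2) x := by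
    have h := (hasDerivAt_pow 2 x).add ((hasDerivAt_id x).const_mul 2)
    simpa [mul_comm, Pi.add_def] using h
  have hnum : HasDerivAt (fun y : ℝ => Real.sqrt (y ^ 2 + 2 * y))
      ((2 * x + 2) / (2 * Real.sqrt (x ^ 2 + 2 * x))) x := hpoly.sqrt (by positivity)
  have hden : HasDerivAt (fun y : ℝ => 1 + y) 1 x := by
    simpa [Pi.add_def] using (hasDerivAt_const x (1:ℝ)).add (hasDerivAt_id x)
  have h := hnum.div hden (by positivity)
  refine h.congr_deriv ?_
  symm
  rw [div_eq_div_iff (by positivity) (by positivity)]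
  field_simp
  have hs2' : Real.sqrt (x * (x + 2)) ^ 2 = x * (x + 2) := Real.sq_sqrt (by positivity)
  linear_combination hs2'

/-- Tangent-line upper bound for `G(x) = √(x²+2x)/(1+x)` in `ln x`, valid for `x ≥ (√17−3)/4`. -/
theorem G_tangent_upper_bound (xh : ℝ) (hxh : (Real.sqrt 17 - 3) / 4 ≤ xh) :
    let ρ := xh / Real.sqrt (xh ^ 2 + 2 * xh) -
      xh * Real.sqrt (xh ^ 2 + 2 * xh) / (1 + xh) ^ 2
    let δ := Real.sqrt (1 - 1 / (1 + xh) ^ 2) - ρ * Real.log xh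
    (∀ x : ℝ, (Real.sqrt 17 - 3) / 4 ≤ x →
        Real.sqrt (x ^ 2 + 2 * x) / (1 + x) ≤ ρ * Real.log x + δ) ∧
      Real.sqrt (xh ^ 2 + 2 * xh) / (1 + xh) = ρ * Real.log xh + δ := by
  intro ρ δ
  have hc4 : (1:ℝ)/4 ≤ (Real.sqrt 17 - 3) / 4 := c0_ge
  have hxh0 : (0:ℝ) < xh := lt_of_lt_of_le (by linarith) hxh
  have hqh : 0 < xh ^ 2 + 2 * xh := by nlinarith
  have hsh : 0 < Real.sqrt (xh ^ 2 + 2 * xh) := Real.sqrt_pos.2 hqh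
  have hsh2 : Real.sqrt (xh ^ 2 + 2 * xh) ^ 2 = xh ^ 2 + 2 * xh := Real.sq_sqrt hqh.le
  have h1h : (0:ℝ) < 1 + xh := by linarith
  -- simplification of ρ
  have hρ : ρ = xh / (Real.sqrt (xh ^ 2 + 2 * xh) * (1 + xh) ^ 2) := by
    show xh / Real.sqrt (xh ^ 2 + 2 * xh) -
      xh * Real.sqrt (xh ^ 2 + 2 * xh) / (1 + xh) ^ 2 = _
    rw [div_sub_div _ _ (by positivity) (by positivity), div_eq_div_iff (by positivity) (by positivity)]
    linear_combination (-(xh * Real.sqrt (xh ^ 2 + 2 * xh) * (1 + xh) ^ 2)) * hsh2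
  -- the equality at xh
  have heq : Real.sqrt (xh ^ 2 + 2 * xh) / (1 + xh) = ρ * Real.log xh + δ := by
    show _ = ρ * Real.log xh + (Real.sqrt (1 - 1 / (1 + xh) ^ 2) - ρ * Real.log xh)
    have h1 : 1 - 1 / (1 + xh) ^ 2 = (xh ^ 2 + 2 * xh) / (1 + xh) ^ 2 := by
      field_simp; ring
    rw [h1, Real.sqrt_div hqh.le, Real.sqrt_sq h1h.le]
    ring
  refine ⟨?_, heq⟩
  intro x hx
  have hx0 : (0:ℝ) < x := lt_of_lt_of_le (by linarith) hx
  -- The function F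
  set F : ℝ → ℝ := fun y => ρ * Real.log y + δ - Real.sqrt (y ^ 2 + 2 * y) / (1 + y) with hF
  have hFh : F xh = 0 := by
    rw [hF]; simp only []; rw [← heq]; ring
  -- derivative of F at any y > 0
  have hFderiv : ∀ y : ℝ, 0 < y → HasDerivAt F
      (ρ / y - 1 / (Real.sqrt (y ^ 2 + 2 * y) * (1 + y) ^ 2)) y := by
    intro y hy
    have h1 : HasDerivAt (fun t : ℝ => ρ * Real.log t + δ) (ρ / y) y := by
      have := ((Real.hasDerivAt_log hy.ne').const_mul ρ).add_const δ
      simpa [mul_one_div, div_eq_mul_inv] using this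
    exact h1.sub (G_hasDeriv hy)
  -- key: ρ vs φ(y)
  have hρnonneg : 0 ≤ ρ := by rw [hρ]; positivity
  have key_le : ∀ y : ℝ, (Real.sqrt 17 - 3) / 4 ≤ y → y ≤ xh →
      ρ / y - 1 / (Real.sqrt (y ^ 2 + 2 * y) * (1 + y) ^ 2) ≤ 0 := by
    intro y hyc hyxh
    have hy0 : (0:ℝ) < y := lt_of_lt_of_le (by linarith) hyc
    have h := phi_anti hyc hyxh
    rw [← hρ] at h
    have hden : 0 < Real.sqrt (y ^ 2 + 2 * y) * (1 + y) ^ 2 := by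
      have : 0 < y ^ 2 + 2 * y := by nlinarith
      have := Real.sqrt_pos.2 this
      positivity
    rw [sub_nonpos, div_le_div_iff₀ hy0 hden] at *
    calc ρ * (Real.sqrt (y ^ 2 + 2 * y) * (1 + y) ^ 2)
        ≤ (y / (Real.sqrt (y ^ 2 + 2 * y) * (1 + y) ^ 2)) *
          (Real.sqrt (y ^ 2 + 2 * y) * (1 + y) ^ 2) := by
          apply mul_le_mul_of_nonneg_right h hden.le
      _ = y := by field_simp
      _ = 1 * y := by ring
  have key_ge : ∀ y : ℝ, xh ≤ y →
      0 ≤ ρ / y - 1 / (Real.sqrt (y ^ 2 + 2 * y) * (1 + y) ^ 2) := by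
    intro y hxy
    have hy0 : (0:ℝ) < y := lt_of_lt_of_le hxh0 hxy
    have h := phi_anti hxh hxy
    rw [← hρ] at h
    have hden : 0 < Real.sqrt (y ^ 2 + 2 * y) * (1 + y) ^ 2 := by
      have : 0 < y ^ 2 + 2 * y := by nlinarith
      have := Real.sqrt_pos.2 this
      positivity
    rw [sub_nonneg, div_le_div_iff₀ hden hy0]
    calc (1:ℝ) * y = (y / (Real.sqrt (y ^ 2 + 2 * y) * (1 + y) ^ 2)) *
          (Real.sqrt (y ^ 2 + 2 * y) * (1 + y) ^ 2) := by field_simp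
      _ ≤ ρ * (Real.sqrt (y ^ 2 + 2 * y) * (1 + y) ^ 2) := by
          apply mul_le_mul_of_nonneg_right h hden.le
  -- F is nonneg on [c₀, ∞)
  have hFnonneg : 0 ≤ F x := by
    rcases le_total x xh with hxxh | hxhx
    · -- antitone on Icc c₀ xh
      have hanti : AntitoneOn F (Icc ((Real.sqrt 17 - 3) / 4) xh) := by
        apply antitoneOn_of_deriv_nonpos (convex_Icc _ _)
        · intro y hy
          have hy0 : (0:ℝ) < y := lt_of_lt_of_le (by linarith) hy.1
          exact (hFderiv y hy0).continuousAt.continuousWithinAt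
        · intro y hy
          rw [interior_Icc] at hy
          have hy0 : (0:ℝ) < y := lt_of_lt_of_le (by linarith) hy.1.le
          exact (hFderiv y hy0).differentiableAt.differentiableWithinAt
        · intro y hy
          rw [interior_Icc] at hy
          have hy0 : (0:ℝ) < y := lt_of_lt_of_le (by linarith) hy.1.le
          rw [(hFderiv y hy0).deriv]
          exact key_le y hy.1.le hy.2.le
      have := hanti ⟨hx, hxxh⟩ ⟨hxh, le_refl xh⟩ hxxh
      linarith [hFh]
    · -- monotone on Ici xh
      have hmono : MonotoneOn F (Ici xh) := by
        apply monotoneOn_of_deriv_nonneg (convex_Ici _)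
        · intro y hy
          have hy0 : (0:ℝ) < y := lt_of_lt_of_le hxh0 hy
          exact (hFderiv y hy0).continuousAt.continuousWithinAt
        · intro y hy
          rw [interior_Ici] at hy
          have hy0 : (0:ℝ) < y := lt_trans hxh0 hy
          exact (hFderiv y hy0).differentiableAt.differentiableWithinAt
        · intro y hy
          rw [interior_Ici] at hy
          have hy0 : (0:ℝ) < y := lt_trans hxh0 hy
          rw [(hFderiv y hy0).deriv]
          exact key_ge y hy.le
      have := hmono (le_refl xh : xh ∈ Ici xh) hxhx hxhx
      linarith [hFh]
  have hFx : F x = ρ * Real.log x + δ - Real.sqrt (x ^ 2 + 2 * x) / (1 + x) := rfl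
  rw [hFx] at hFnonneg
  linarith [hFnonneg]
end

section
/- Define G(x) = √(x² + 2x)/(1+x) for x > 0 and let c₀ = (√17 − 3)/4. Then the function t ↦ G(e^t) = √(e^{2t} + 2e^t)/(1 + e^t) is concave on the interval [ln(c₀), ∞). -/
open Real Set

noncomputable def Ffun : ℝ → ℝ := fun t => Real.sqrt (Real.exp (2 * t) + 2 * Real.exp t) / (1 + Real.exp t)
noncomputable def Fd : ℝ → ℝ := fun t => Real.exp t / ((1 + Real.exp t) ^ 2 * Real.sqrt (Real.exp (2 * t) + 2 * Real.exp t))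

lemma Epos (t : ℝ) : 0 < Real.exp (2 * t) + 2 * Real.exp t := by positivity

lemma hasDerivAt_Ffun (t : ℝ) : HasDerivAt Ffun (Fd t) t := by
  have hx := Real.hasDerivAt_exp t
  have h2 : HasDerivAt (fun t : ℝ => Real.exp (2 * t)) (Real.exp (2 * t) * 2) t := by
    simpa using ((hasDerivAt_id t).const_mul 2).exp
  have hE : HasDerivAt (fun t : ℝ => Real.exp (2 * t) + 2 * Real.exp t)
      (Real.exp (2 * t) * 2 + 2 * Real.exp t) t := h2.add (hx.const_mul 2)
  have hs := hE.sqrt (Epos t).ne'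
  have hD : HasDerivAt (fun t : ℝ => 1 + Real.exp t) (Real.exp t) t := hx.const_add 1
  have hdiv := hs.div hD (by positivity : (0:ℝ) < 1 + Real.exp t).ne'
  refine hdiv.congr_deriv (Eq.symm ?_)
  have hx2 : Real.exp (2 * t) = Real.exp t * Real.exp t := by
    rw [two_mul, Real.exp_add]
  have hs2 : Real.sqrt (Real.exp (2 * t) + 2 * Real.exp t) *
      Real.sqrt (Real.exp (2 * t) + 2 * Real.exp t) = Real.exp (2 * t) + 2 * Real.exp t :=
    Real.mul_self_sqrt (Epos t).le
  have spos : 0 < Real.sqrt (Real.exp (2 * t) + 2 * Real.exp t) := Real.sqrt_pos.mpr (Epos t)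
  have xpos := Real.exp_pos t
  rw [Fd]
  generalize hsv : Real.sqrt (Real.exp (2 * t) + 2 * Real.exp t) = s at *
  generalize hxv : Real.exp t = x at *
  rw [hx2] at hs2
  have Dpos : (0:ℝ) < 1 + x := by positivity
  rw [hx2]
  field_simp
  linear_combination hs2

noncomputable def Fdd : ℝ → ℝ := fun t =>
  (Real.exp t * ((1 + Real.exp t) ^ 2 * Real.sqrt (Real.exp (2 * t) + 2 * Real.exp t)) -
    Real.exp t * ((2 * (1 + Real.exp t) * Real.exp t) * Real.sqrt (Real.exp (2 * t) + 2 * Real.exp t) +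
      (1 + Real.exp t) ^ 2 * ((Real.exp (2 * t) * 2 + 2 * Real.exp t) /
        (2 * Real.sqrt (Real.exp (2 * t) + 2 * Real.exp t))))) /
  ((1 + Real.exp t) ^ 2 * Real.sqrt (Real.exp (2 * t) + 2 * Real.exp t)) ^ 2

lemma hasDerivAt_Fd (t : ℝ) : HasDerivAt Fd (Fdd t) t := by
  have hx := Real.hasDerivAt_exp t
  have h2 : HasDerivAt (fun t : ℝ => Real.exp (2 * t)) (Real.exp (2 * t) * 2) t := by
    simpa using ((hasDerivAt_id t).const_mul 2).exp
  have hE : HasDerivAt (fun t : ℝ => Real.exp (2 * t) + 2 * Real.exp t)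
      (Real.exp (2 * t) * 2 + 2 * Real.exp t) t := h2.add (hx.const_mul 2)
  have hs := hE.sqrt (Epos t).ne'
  have hD : HasDerivAt (fun t : ℝ => 1 + Real.exp t) (Real.exp t) t := hx.const_add 1
  have hpow := hD.pow 2
  have hg := hpow.mul hs
  have spos : 0 < Real.sqrt (Real.exp (2 * t) + 2 * Real.exp t) := Real.sqrt_pos.mpr (Epos t)
  have hne : ((1 + Real.exp t) ^ 2 * Real.sqrt (Real.exp (2 * t) + 2 * Real.exp t)) ≠ 0 := by
    positivity
  have hq := hx.div hg hne
  refine hq.congr_deriv (Eq.symm ?_)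
  rw [Fdd]
  simp only [Pi.mul_apply, Pi.pow_apply]
  push_cast
  ring_nf

lemma Fdd_nonpos (t : ℝ) (h : (Real.sqrt 17 - 3) / 4 ≤ Real.exp t) : Fdd t ≤ 0 := by
  have hx2 : Real.exp (2 * t) = Real.exp t * Real.exp t := by
    rw [two_mul, Real.exp_add]
  have hs2 : Real.sqrt (Real.exp (2 * t) + 2 * Real.exp t) *
      Real.sqrt (Real.exp (2 * t) + 2 * Real.exp t) = Real.exp (2 * t) + 2 * Real.exp t :=
    Real.mul_self_sqrt (Epos t).le
  have spos : 0 < Real.sqrt (Real.exp (2 * t) + 2 * Real.exp t) := Real.sqrt_pos.mpr (Epos t)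
  have xpos := Real.exp_pos t
  rw [Fdd]
  generalize hsv : Real.sqrt (Real.exp (2 * t) + 2 * Real.exp t) = s at *
  generalize hxv : Real.exp t = x at *
  rw [hx2] at hs2 ⊢
  have h17 : Real.sqrt 17 * Real.sqrt 17 = 17 := Real.mul_self_sqrt (by norm_num)
  have key : 2 * x ^ 2 + 3 * x - 1 ≥ 0 := by
    nlinarith [Real.sqrt_nonneg 17, h17, h, xpos]
  apply div_nonpos_of_nonpos_of_nonneg _ (by positivity)
  set N := x * ((1 + x) ^ 2 * s) -
    x * (2 * (1 + x) * x * s + (1 + x) ^ 2 * ((x * x * 2 + 2 * x) / (2 * s))) with hN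
  have hN2 : N * (2 * s) = 2 * x ^ 2 * (1 + x) * (1 - 3 * x - 2 * x ^ 2) := by
    rw [hN]
    field_simp
    linear_combination (1 - x) * hs2
  have hfac : 2 * x ^ 2 * (1 + x) * (1 - 3 * x - 2 * x ^ 2) ≤ 0 :=
    mul_nonpos_of_nonneg_of_nonpos (by positivity) (by linarith)
  by_contra hc
  push_neg at hc
  have := mul_pos hc (by positivity : (0:ℝ) < 2 * s)
  linarith [hN2, hfac]

/-- `t ↦ G(eᵗ) = √(e^{2t} + 2eᵗ)/(1 + eᵗ)` is concave on `[ln((√17−3)/4), ∞)`. -/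
theorem G_exp_concaveOn :
    ConcaveOn ℝ (Set.Ici (Real.log ((Real.sqrt 17 - 3) / 4)))
      (fun t : ℝ => Real.sqrt (Real.exp (2 * t) + 2 * Real.exp t) / (1 + Real.exp t)) := by
  have hcont : Continuous Ffun := by
    apply Continuous.div
    · exact Real.continuous_sqrt.comp
        ((Real.continuous_exp.comp (continuous_const.mul continuous_id)).add
          (continuous_const.mul Real.continuous_exp))
    · exact continuous_const.add Real.continuous_exp
    · intro t; positivity
  have hdF : deriv Ffun = Fd := funext fun t => (hasDerivAt_Ffun t).deriv
  have hc0 : (0:ℝ) < (Real.sqrt 17 - 3) / 4 := by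
    have h17 : Real.sqrt 17 * Real.sqrt 17 = 17 := Real.mul_self_sqrt (by norm_num)
    nlinarith [Real.sqrt_nonneg 17]
  show ConcaveOn ℝ _ Ffun
  apply concaveOn_of_deriv2_nonpos (convex_Ici _) hcont.continuousOn
  · intro t _
    exact (hasDerivAt_Ffun t).differentiableAt.differentiableWithinAt
  · rw [hdF]
    intro t _
    exact (hasDerivAt_Fd t).differentiableAt.differentiableWithinAt
  · intro t ht
    rw [interior_Ici] at ht
    have hxt : (Real.sqrt 17 - 3) / 4 ≤ Real.exp t := by
      calc (Real.sqrt 17 - 3) / 4 = Real.exp (Real.log ((Real.sqrt 17 - 3) / 4)) :=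
            (Real.exp_log hc0).symm
        _ ≤ Real.exp t := (Real.exp_le_exp.mpr ht.le)
    show deriv (deriv Ffun) t ≤ 0
    rw [hdF, (hasDerivAt_Fd t).deriv]
    exact Fdd_nonpos t hxt
end

section
/- Let M be a nonempty finite index set, K > 0 a real constant, and for each m ∈ M let β_m > 0. For p > 0 define θ(p) = K·p·Σ_{m∈M} β_m²·Π_{n∈M, n≠m}(K·p·β_n + 1). Fix p̂ > 0 and set a = 1 + (Σ_{m∈M} β_m²·Σ_{n∈M, n≠m} K·β_n·p̂·Π_{i∈M, i≠m, i≠n}(K·β_i·p̂ + 1)) / (Σ_{m∈M} β_m²·Π_{n∈M, n≠m}(K·β_n·p̂ + 1)) and c = ln(θ(p̂)) − a·ln(p̂). Then for every p > 0 one has θ(p) ≥ e^c · p^a, with equality when p = p̂. -/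
open Finset Real

private lemma amgm2_aux {u t : ℝ} (hu : 0 ≤ u) (ht : 0 < t) :
    (u + 1) * t ^ (u / (u + 1)) ≤ u * t + 1 := by
  have hu1 : (0:ℝ) < u + 1 := by linarith
  have h := Real.geom_mean_le_arith_mean2_weighted
    (w₁ := u / (u + 1)) (w₂ := 1 / (u + 1)) (p₁ := t) (p₂ := 1)
    (by positivity) (by positivity) ht.le zero_le_one (by field_simp)
  rw [Real.one_rpow, mul_one, mul_one] at h
  calc (u + 1) * t ^ (u / (u + 1)) ≤ (u + 1) * (u / (u + 1) * t + 1 / (u + 1)) :=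
        mul_le_mul_of_nonneg_left h hu1.le
    _ = u * t + 1 := by field_simp

/-- Best local monomial lower bound of `θ(p)` at `p̂`: `θ(p) ≥ e^c pᵃ`, with equality at `p = p̂`. -/
theorem theta_monomial_lower_bound {ι : Type*} [DecidableEq ι] (M : Finset ι) (hM : M.Nonempty)
    (K : ℝ) (hK : 0 < K) (β : ι → ℝ) (hβ : ∀ m ∈ M, 0 < β m)
    (ph : ℝ) (hph : 0 < ph) :
    let θ := fun p : ℝ => K * p * ∑ m ∈ M, (β m) ^ 2 * ∏ n ∈ M.erase m, (K * p * β n + 1)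
    let a := 1 +
      (∑ m ∈ M, (β m) ^ 2 *
          ∑ n ∈ M.erase m, (K * β n * ph * ∏ i ∈ (M.erase m).erase n, (K * β i * ph + 1))) /
        (∑ m ∈ M, (β m) ^ 2 * ∏ n ∈ M.erase m, (K * β n * ph + 1))
    let c := Real.log (θ ph) - a * Real.log ph
    (∀ p : ℝ, 0 < p → Real.exp c * p ^ a ≤ θ p) ∧ Real.exp c * ph ^ a = θ ph := by
  intro θ a c
  set f : ι → ℝ := fun n => K * β n * ph + 1 with hfdef
  have hfpos : ∀ n ∈ M, 0 < f n := fun n hn => by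
    have := hβ n hn; simp only [hfdef]; positivity
  set w : ι → ℝ := fun n => K * β n * ph / (K * β n * ph + 1) with hwdef
  have hwnonneg : ∀ n ∈ M, 0 ≤ w n := fun n hn => by
    have := hβ n hn; simp only [hwdef]; positivity
  -- denominator T and numerator S of the exponent formula
  set T : ℝ := ∑ m ∈ M, β m ^ 2 * ∏ n ∈ M.erase m, f n with hTdef
  set S : ℝ := ∑ m ∈ M, β m ^ 2 *
      ∑ n ∈ M.erase m, (K * β n * ph * ∏ i ∈ (M.erase m).erase n, f i) with hSdef
  have hTpos : 0 < T := by
    refine Finset.sum_pos (fun m hm => ?_) hM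
    have hbm := hβ m hm
    have : 0 < ∏ n ∈ M.erase m, f n :=
      Finset.prod_pos fun n hn => hfpos n (mem_of_mem_erase hn)
    positivity
  -- terms at p̂
  set g : ι → ℝ := fun m => K * ph * (β m ^ 2 * ∏ n ∈ M.erase m, f n) with hgdef
  have hgnonneg : ∀ m ∈ M, 0 ≤ g m := fun m hm => by
    have hpr : 0 < ∏ n ∈ M.erase m, f n :=
      Finset.prod_pos fun n hn => hfpos n (mem_of_mem_erase hn)
    have hbm := hβ m hm
    simp only [hgdef]; positivity
  have hsumg : ∑ m ∈ M, g m = K * ph * T := by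
    simp only [hgdef, hTdef, Finset.mul_sum]
  have hθph : θ ph = K * ph * T := by
    simp only [θ, hTdef, hfdef]
    congr 1
    exact Finset.sum_congr rfl fun m _ => by
      congr 1; exact Finset.prod_congr rfl fun n _ => by ring
  have hθphpos : 0 < θ ph := by rw [hθph]; positivity
  -- per-m exponents
  set e : ι → ℝ := fun m => 1 + ∑ n ∈ M.erase m, w n with hedef
  -- Key pointwise lower bound: for each p > 0, with t = p / ph,
  -- ∑ g m * t ^ (e m) ≤ θ p
  have hstep1 : ∀ p : ℝ, 0 < p → ∑ m ∈ M, g m * (p / ph) ^ (e m) ≤ θ p := by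
    intro p hp
    have ht : 0 < p / ph := div_pos hp hph
    have hθp : θ p = ∑ m ∈ M, K * p * (β m ^ 2 * ∏ n ∈ M.erase m, (K * p * β n + 1)) := by
      simp only [θ, Finset.mul_sum]
    rw [hθp]
    refine Finset.sum_le_sum fun m hm => ?_
    -- product bound
    have hfac : ∀ n ∈ M.erase m, f n * (p / ph) ^ (w n) ≤ K * p * β n + 1 := by
      intro n hn
      have hbn := hβ n (mem_of_mem_erase hn)
      have hu : 0 ≤ K * β n * ph := by positivity
      have h := amgm2_aux hu ht
      have hKp : K * β n * ph * (p / ph) = K * p * β n := by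
        field_simp
      show (K * β n * ph + 1) * (p / ph) ^ (K * β n * ph / (K * β n * ph + 1))
          ≤ K * p * β n + 1
      rw [← hKp]; exact h
    have hprod : (∏ n ∈ M.erase m, f n) * (p / ph) ^ (∑ n ∈ M.erase m, w n)
        ≤ ∏ n ∈ M.erase m, (K * p * β n + 1) := by
      rw [Real.rpow_sum_of_pos ht, ← Finset.prod_mul_distrib]
      refine Finset.prod_le_prod (fun n hn => ?_) hfac
      have := hfpos n (mem_of_mem_erase hn)
      positivity
    have hprodpos : (0:ℝ) < ∏ n ∈ M.erase m, f n :=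
      Finset.prod_pos fun n hn => hfpos n (mem_of_mem_erase hn)
    have hbm := hβ m hm
    have hrw : g m * (p / ph) ^ (e m)
        = K * p * (β m ^ 2 * ((∏ n ∈ M.erase m, f n)
            * (p / ph) ^ (∑ n ∈ M.erase m, w n))) := by
      simp only [hgdef, hedef]
      rw [Real.rpow_add ht, Real.rpow_one,
        show K * p = K * ph * (p / ph) from by field_simp]
      ring
    rw [hrw]
    have hKp : (0:ℝ) ≤ K * p := by positivity
    have hb2 : (0:ℝ) ≤ β m ^ 2 := by positivity
    exact mul_le_mul_of_nonneg_left (mul_le_mul_of_nonneg_left hprod hb2) hKp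
  -- the averaged exponent equals a
  have hexp : ∑ m ∈ M, g m * e m = K * ph * T * a := by
    have hkey : ∀ m ∈ M, (∏ n ∈ M.erase m, f n) * (∑ n ∈ M.erase m, w n)
        = ∑ n ∈ M.erase m, (K * β n * ph * ∏ i ∈ (M.erase m).erase n, f i) := by
      intro m hm
      rw [Finset.mul_sum]
      refine Finset.sum_congr rfl fun n hn => ?_
      have hfn : f n ≠ 0 := (hfpos n (mem_of_mem_erase hn)).ne'
      rw [← Finset.mul_prod_erase (M.erase m) f hn]
      simp only [hwdef, hfdef] at hfn ⊢
      field_simp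
    have h1 : ∑ m ∈ M, g m * e m = K * ph * T + K * ph * S := by
      simp only [hedef, mul_add, mul_one, Finset.sum_add_distrib, hsumg]
      congr 1
      rw [hSdef, Finset.mul_sum]
      refine Finset.sum_congr rfl fun m hm => ?_
      rw [← hkey m hm]
      simp only [hgdef]; ring
    rw [h1]
    show K * ph * T + K * ph * S = K * ph * T * (1 + S / T)
    field_simp
  -- AM-GM over m: θ ph * t ^ a ≤ ∑ g m * t ^ (e m)
  have hstep2 : ∀ p : ℝ, 0 < p → θ ph * (p / ph) ^ a ≤ ∑ m ∈ M, g m * (p / ph) ^ (e m) := by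
    intro p hp
    have ht : 0 < p / ph := div_pos hp hph
    set lam : ι → ℝ := fun m => g m / (K * ph * T) with hlamdef
    have hKphT : (0:ℝ) < K * ph * T := by positivity
    have hlamnn : ∀ m ∈ M, 0 ≤ lam m := fun m hm =>
      div_nonneg (hgnonneg m hm) hKphT.le
    have hlamsum : ∑ m ∈ M, lam m = 1 := by
      simp only [hlamdef, ← Finset.sum_div, hsumg]
      field_simp
    have hamgm := Real.geom_mean_le_arith_mean_weighted M lam
      (fun m => (p / ph) ^ (e m)) hlamnn hlamsum
      (fun m _ => (Real.rpow_pos_of_pos ht _).le)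
    have hprodeq : ∏ m ∈ M, ((p / ph) ^ (e m)) ^ (lam m) = (p / ph) ^ a := by
      have : ∀ m ∈ M, ((p / ph) ^ (e m)) ^ (lam m) = (p / ph) ^ (e m * lam m) :=
        fun m _ => (Real.rpow_mul ht.le _ _).symm
      rw [Finset.prod_congr rfl this, ← Real.rpow_sum_of_pos ht]
      congr 1
      have : ∑ m ∈ M, e m * lam m = a := by
        simp only [hlamdef, mul_div_assoc']
        rw [← Finset.sum_div]
        have : ∑ m ∈ M, e m * g m = K * ph * T * a := by
          rw [← hexp]; exact Finset.sum_congr rfl fun m _ => mul_comm _ _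
        rw [this]
        field_simp
      rw [this]
    rw [hprodeq] at hamgm
    calc θ ph * (p / ph) ^ a = K * ph * T * (p / ph) ^ a := by rw [hθph]
      _ ≤ K * ph * T * ∑ m ∈ M, lam m * (p / ph) ^ (e m) :=
          mul_le_mul_of_nonneg_left hamgm (by positivity)
      _ = ∑ m ∈ M, g m * (p / ph) ^ (e m) := by
          rw [Finset.mul_sum]
          refine Finset.sum_congr rfl fun m hm => ?_
          simp only [hlamdef]
          field_simp
  -- rewrite exp c * p ^ a
  have hec : ∀ p : ℝ, 0 < p → Real.exp c * p ^ a = θ ph * (p / ph) ^ a := by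
    intro p hp
    have h1 : Real.exp c = θ ph / ph ^ a := by
      simp only [c, Real.exp_sub, Real.exp_log hθphpos]
      congr 1
      rw [Real.rpow_def_of_pos hph, mul_comm]
    rw [h1, Real.div_rpow hp.le hph.le, div_mul_eq_mul_div, mul_div_assoc]
  constructor
  · intro p hp
    rw [hec p hp]
    exact le_trans (hstep2 p hp) (hstep1 p hp)
  · rw [hec ph hph, div_self hph.ne', Real.one_rpow, mul_one]
end

section
/- Let M be a nonempty finite index set, K > 0 a real constant, and for each m ∈ M let β_m > 0. Then the function F(x) = ln(K·e^x·Σ_{m∈M} β_m²·Π_{n∈M, n≠m}(K·β_n·e^x + 1)), i.e. the logarithm of θ(p) = K·p·Σ_{m∈M} β_m²·Π_{n∈M, n≠m}(K·p·β_n + 1) evaluated at p = e^x, is convex on ℝ. -/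
open Finset Real

/-- log-sum-exp with positive coefficients is convex. -/
lemma convexOn_log_sum_exp {ι : Type*} (s : Finset ι) (hs : s.Nonempty) (c a : ι → ℝ)
    (hc : ∀ i ∈ s, 0 < c i) :
    ConvexOn ℝ Set.univ (fun x : ℝ => Real.log (∑ i ∈ s, c i * Real.exp (a i * x))) := by
  have hSpos : ∀ z : ℝ, 0 < ∑ i ∈ s, c i * Real.exp (a i * z) := fun z =>
    Finset.sum_pos (fun i hi => mul_pos (hc i hi) (Real.exp_pos _)) hs
  refine ⟨convex_univ, ?_⟩
  intro x _ y _ p q hp hq hpq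
  rcases eq_or_lt_of_le hp with hp0 | hp
  · have : q = 1 := by linarith
    simp [← hp0, this]
  rcases eq_or_lt_of_le hq with hq0 | hq
  · have : p = 1 := by linarith
    simp [← hq0, this]
  simp only [smul_eq_mul]
  have hP : (1 / p).HolderConjugate (1 / q) := by
    exact Real.holderConjugate_one_div hp hq hpq
  have key : ∑ i ∈ s, c i * Real.exp (a i * (p * x + q * y)) ≤
      (∑ i ∈ s, c i * Real.exp (a i * x)) ^ p * (∑ i ∈ s, c i * Real.exp (a i * y)) ^ q := by
    have h1 : ∀ i ∈ s, c i * Real.exp (a i * (p * x + q * y)) =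
        ((c i * Real.exp (a i * x)) ^ p) * ((c i * Real.exp (a i * y)) ^ q) := by
      intro i hi
      rw [Real.mul_rpow (le_of_lt (hc i hi)) (Real.exp_pos _).le,
          Real.mul_rpow (le_of_lt (hc i hi)) (Real.exp_pos _).le,
          ← Real.exp_mul, ← Real.exp_mul]
      have hcpq : c i ^ p * c i ^ q = c i := by
        rw [← Real.rpow_add (hc i hi), hpq, Real.rpow_one]
      rw [mul_mul_mul_comm, hcpq, ← Real.exp_add]
      ring_nf
    rw [Finset.sum_congr rfl h1]
    have := Real.inner_le_Lp_mul_Lq_of_nonneg s hP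
      (f := fun i => (c i * Real.exp (a i * x)) ^ p)
      (g := fun i => (c i * Real.exp (a i * y)) ^ q)
      (fun i hi => Real.rpow_nonneg (mul_nonneg (hc i hi).le (Real.exp_pos _).le) _)
      (fun i hi => Real.rpow_nonneg (mul_nonneg (hc i hi).le (Real.exp_pos _).le) _)
    have e1 : ∀ i ∈ s, ((c i * Real.exp (a i * x)) ^ p) ^ (1 / p) = c i * Real.exp (a i * x) := by
      intro i hi
      rw [one_div, ← Real.rpow_mul (mul_nonneg (hc i hi).le (Real.exp_pos _).le),
        mul_inv_cancel₀ hp.ne', Real.rpow_one]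
    have e2 : ∀ i ∈ s, ((c i * Real.exp (a i * y)) ^ q) ^ (1 / q) = c i * Real.exp (a i * y) := by
      intro i hi
      rw [one_div, ← Real.rpow_mul (mul_nonneg (hc i hi).le (Real.exp_pos _).le),
        mul_inv_cancel₀ hq.ne', Real.rpow_one]
    rw [Finset.sum_congr rfl e1, Finset.sum_congr rfl e2] at this
    have hpp : 1 / (1 / p) = p := one_div_one_div p
    have hqq : 1 / (1 / q) = q := one_div_one_div q
    rw [hpp, hqq] at this
    exact this
  calc Real.log (∑ i ∈ s, c i * Real.exp (a i * (p * x + q * y)))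
      ≤ Real.log ((∑ i ∈ s, c i * Real.exp (a i * x)) ^ p *
          (∑ i ∈ s, c i * Real.exp (a i * y)) ^ q) :=
        Real.log_le_log (hSpos _) key
    _ = p * Real.log (∑ i ∈ s, c i * Real.exp (a i * x)) +
        q * Real.log (∑ i ∈ s, c i * Real.exp (a i * y)) := by
        rw [Real.log_mul (Real.rpow_pos_of_pos (hSpos _) _).ne' (Real.rpow_pos_of_pos (hSpos _) _).ne',
            Real.log_rpow (hSpos _), Real.log_rpow (hSpos _)]

/-- `F(x) = ln θ(eˣ)` is convex on `ℝ`, where `θ` is the numerator polynomial of the MRC SINR. -/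
theorem log_theta_exp_convexOn {ι : Type*} [DecidableEq ι] (M : Finset ι) (hM : M.Nonempty)
    (K : ℝ) (hK : 0 < K) (β : ι → ℝ) (hβ : ∀ m ∈ M, 0 < β m) :
    ConvexOn ℝ Set.univ (fun x : ℝ =>
      Real.log (K * Real.exp x *
        ∑ m ∈ M, (β m) ^ 2 * ∏ n ∈ M.erase m, (K * β n * Real.exp x + 1))) := by
  classical
  set s : Finset (Σ _ : ι, Finset ι) := M.sigma (fun m => (M.erase m).powerset) with hs
  set c : (Σ _ : ι, Finset ι) → ℝ := fun p => K * β p.1 ^ 2 * ∏ n ∈ p.2, (K * β n) with hc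
  set a : (Σ _ : ι, Finset ι) → ℝ := fun p => (p.2.card : ℝ) + 1 with ha
  have heq : (fun x : ℝ =>
      Real.log (K * Real.exp x *
        ∑ m ∈ M, (β m) ^ 2 * ∏ n ∈ M.erase m, (K * β n * Real.exp x + 1))) =
      fun x : ℝ => Real.log (∑ p ∈ s, c p * Real.exp (a p * x)) := by
    funext x
    congr 1
    rw [hs, Finset.sum_sigma]
    rw [Finset.mul_sum]
    refine Finset.sum_congr rfl fun m hm => ?_
    have hexp : ∏ n ∈ M.erase m, (K * β n * Real.exp x + 1) =
        ∑ t ∈ (M.erase m).powerset, (∏ n ∈ t, (K * β n)) * Real.exp x ^ t.card := by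
      rw [Finset.prod_add]
      refine Finset.sum_congr rfl fun t ht => ?_
      rw [Finset.prod_const_one, mul_one, ← Finset.prod_const, ← Finset.prod_mul_distrib]
    rw [hexp, Finset.mul_sum, Finset.mul_sum]
    refine Finset.sum_congr rfl fun t ht => ?_
    have : Real.exp (((t.card : ℝ) + 1) * x) = Real.exp x ^ t.card * Real.exp x := by
      rw [add_mul, one_mul, Real.exp_add, ← Real.exp_nat_mul]
    simp only [hc, ha, this]
    ring
  rw [heq]
  refine convexOn_log_sum_exp s ?_ c a ?_
  · obtain ⟨m, hm⟩ := hM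
    exact ⟨⟨m, ∅⟩, Finset.mem_sigma.2 ⟨hm, Finset.empty_mem_powerset _⟩⟩
  · rintro ⟨m, t⟩ hp
    rw [hs, Finset.mem_sigma, Finset.mem_powerset] at hp
    refine mul_pos (mul_pos hK (pow_pos (hβ m hp.1) 2)) (Finset.prod_pos fun n hn => ?_)
    exact mul_pos hK (hβ n (Finset.mem_of_mem_erase (hp.2 hn)))
end

section
/- Let M be a nonempty finite index set, K > 0 a real constant, and let J be a finite index set containing a distinguished element k. For each m ∈ M and j ∈ J let β_{m,j} > 0. For q > 0 define ϖ(q) = Σ_{m∈M} √(K·q·β_{m,k}²)·Π_{n∈M, n≠m} √(K·q·β_{n,k} + 1) and, for j ∈ J, ϑ_j(q) = Π_{m∈M} √(K·q·β_{m,j} + 1). Fix p̂_j > 0 for each j ∈ J and set b_j = Σ_{m∈M} K·β_{m,j}·p̂_j/(K·β_{m,j}·p̂_j + 1) for j ≠ k, b_k = 2·(d/dt) ln ϖ(e^t) evaluated at t = ln(p̂_k), and d = ln(ϖ(p̂_k)²·Π_{j∈J, j≠k} ϑ_j(p̂_j)²) − Σ_{j∈J} b_j·ln(p̂_j). Then for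 all choices of p_j > 0 (j ∈ J) one has ϖ(p_k)²·Π_{j∈J, j≠k} ϑ_j(p_j)² ≥ e^d · Π_{j∈J} p_j^{b_j}, with equality when p_j = p̂_j for all j ∈ J. -/
open Real Finset

lemma aux_tangent {a x y : ℝ} (ha : 0 < a) (hx : 0 < x) (hy : 0 < y) :
    a * y / (a * y + 1) * (Real.log x - Real.log y) ≤
      Real.log (a * x + 1) - Real.log (a * y + 1) := by
  set l := a * y / (a * y + 1) with hl
  have h1 : (0:ℝ) < a * y + 1 := by positivity
  have hl0 : 0 ≤ l := by positivity
  have hl1 : l + (1 - l) = 1 := by ring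
  have hl1' : 0 ≤ 1 - l := by
    rw [hl, sub_nonneg]
    exact div_le_one_of_le₀ (by linarith) h1.le
  have hu : (0:ℝ) < x / y := by positivity
  have hgm := Real.geom_mean_le_arith_mean2_weighted hl0 hl1' hu.le zero_le_one hl1
  rw [Real.one_rpow, mul_one, mul_one] at hgm
  have hkey : (a * y + 1) * (x / y) ^ l ≤ a * x + 1 := by
    have heq : (a * y + 1) * (l * (x / y) + (1 - l)) = a * x + 1 := by
      rw [hl]; field_simp; ring
    calc (a * y + 1) * (x / y) ^ l ≤ (a * y + 1) * (l * (x / y) + (1 - l)) :=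
          mul_le_mul_of_nonneg_left hgm h1.le
      _ = a * x + 1 := heq
  have hpos : (0:ℝ) < (a * y + 1) * (x / y) ^ l := by positivity
  have := Real.log_le_log hpos hkey
  rw [Real.log_mul h1.ne' (by positivity), Real.log_rpow hu, Real.log_div hx.ne' hy.ne'] at this
  linarith

lemma aux_tangent_t {a : ℝ} (ha : 0 < a) (t th : ℝ) :
    Real.exp th * a / (Real.exp th * a + 1) * (t - th) ≤
      Real.log (Real.exp t * a + 1) - Real.log (Real.exp th * a + 1) := by
  have h := aux_tangent (a := a) ha (Real.exp_pos t) (Real.exp_pos th)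
  rw [Real.log_exp, Real.log_exp] at h
  calc Real.exp th * a / (Real.exp th * a + 1) * (t - th)
      = a * Real.exp th / (a * Real.exp th + 1) * (t - th) := by ring_nf
    _ ≤ Real.log (a * Real.exp t + 1) - Real.log (a * Real.exp th + 1) := h
    _ = Real.log (Real.exp t * a + 1) - Real.log (Real.exp th * a + 1) := by
        rw [mul_comm a, mul_comm a]

lemma aux_deriv_loglin {c : ℝ} (hc : 0 < c) (t : ℝ) :
    HasDerivAt (fun t : ℝ => Real.log (Real.exp t * c)) 1 t := by
  have h := ((Real.hasDerivAt_exp t).mul_const c).log (by positivity)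
  rwa [div_self (by positivity : (Real.exp t * c) ≠ 0)] at h

lemma aux_deriv_loglin1 {c : ℝ} (hc : 0 < c) (t : ℝ) :
    HasDerivAt (fun t : ℝ => Real.log (Real.exp t * c + 1))
      (Real.exp t * c / (Real.exp t * c + 1)) t :=
  (((Real.hasDerivAt_exp t).mul_const c).add_const 1).log (by positivity)

lemma aux_jensen_exp {ι : Type*} (S : Finset ι) (w c : ι → ℝ)
    (hw : ∀ i ∈ S, 0 ≤ w i) (h1 : ∑ i ∈ S, w i = 1) :
    Real.exp (∑ i ∈ S, w i * c i) ≤ ∑ i ∈ S, w i * Real.exp (c i) := by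
  simpa [smul_eq_mul] using convexOn_exp.map_sum_le hw h1 (fun i _ => Set.mem_univ (c i))

lemma aux_sqrt_exp {x : ℝ} (hx : 0 < x) :
    Real.sqrt x = Real.exp ((1/2) * Real.log x) := by
  rw [Real.sqrt_eq_rpow, Real.rpow_def_of_pos hx, mul_comm]

/-- key lemma: tangent-line lower bound for `t ↦ log (∑ exp (g m t))` where each
`g m t = (1/2) log (exp t * c0 m) + (1/2) ∑_{n ∈ erase m} log (exp t * c n + 1)`. -/
lemma aux_logsum_tangent {ι : Type*} [DecidableEq ι] (M : Finset ι) (hM : M.Nonempty)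
    (c0 c : ι → ℝ) (hc0 : ∀ m ∈ M, 0 < c0 m) (hc : ∀ n ∈ M, 0 < c n) (th : ℝ) :
    let g := fun (m : ι) (t : ℝ) => (1/2) * Real.log (Real.exp t * c0 m) +
      (1/2) * ∑ n ∈ M.erase m, Real.log (Real.exp t * c n + 1)
    let G := fun m : ι => 1/2 + (1/2) * ∑ n ∈ M.erase m,
      Real.exp th * c n / (Real.exp th * c n + 1)
    let D := (∑ m ∈ M, Real.exp (g m th) * G m) / (∑ m ∈ M, Real.exp (g m th))
    HasDerivAt (fun t => Real.log (∑ m ∈ M, Real.exp (g m t))) D th ∧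
      ∀ t : ℝ, Real.log (∑ m ∈ M, Real.exp (g m th)) + D * (t - th) ≤
        Real.log (∑ m ∈ M, Real.exp (g m t)) := by
  intro g G D
  have hgG : ∀ m ∈ M, HasDerivAt (fun t => g m t) (G m) th := by
    intro m hm
    have h1 := (aux_deriv_loglin (hc0 m hm) th).const_mul (1/2 : ℝ)
    have h2 : HasDerivAt (fun t : ℝ => ∑ n ∈ M.erase m, Real.log (Real.exp t * c n + 1))
        (∑ n ∈ M.erase m, Real.exp th * c n / (Real.exp th * c n + 1)) th :=
      HasDerivAt.fun_sum (fun n hn => aux_deriv_loglin1 (hc n (Finset.mem_of_mem_erase hn)) th)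
    have := h1.fun_add (h2.const_mul (1/2 : ℝ))
    show HasDerivAt (fun t : ℝ => (1/2) * Real.log (Real.exp t * c0 m) +
        (1/2) * ∑ n ∈ M.erase m, Real.log (Real.exp t * c n + 1))
      (1/2 + (1/2) * ∑ n ∈ M.erase m, Real.exp th * c n / (Real.exp th * c n + 1)) th
    simpa using this
  have hSpos : ∀ t : ℝ, 0 < ∑ m ∈ M, Real.exp (g m t) := fun t =>
    Finset.sum_pos (fun m _ => Real.exp_pos _) hM
  have hsum : HasDerivAt (fun t => ∑ m ∈ M, Real.exp (g m t))
      (∑ m ∈ M, Real.exp (g m th) * G m) th :=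
    HasDerivAt.fun_sum (fun m hm => (hgG m hm).exp)
  have hF : HasDerivAt (fun t => Real.log (∑ m ∈ M, Real.exp (g m t))) D th :=
    hsum.log (hSpos th).ne'
  refine ⟨hF, fun t => ?_⟩
  -- per-term tangent bound
  have hterm : ∀ m ∈ M, g m th + G m * (t - th) ≤ g m t := by
    intro m hm
    have hA : Real.log (Real.exp t * c0 m) - Real.log (Real.exp th * c0 m) = t - th := by
      rw [Real.log_mul (Real.exp_ne_zero t) (hc0 m hm).ne',
        Real.log_mul (Real.exp_ne_zero th) (hc0 m hm).ne', Real.log_exp, Real.log_exp]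
      ring
    have hB : ∑ n ∈ M.erase m, Real.exp th * c n / (Real.exp th * c n + 1) * (t - th) ≤
        ∑ n ∈ M.erase m, (Real.log (Real.exp t * c n + 1) - Real.log (Real.exp th * c n + 1)) :=
      Finset.sum_le_sum fun n hn => aux_tangent_t (hc n (Finset.mem_of_mem_erase hn)) t th
    have hB' : (∑ n ∈ M.erase m, Real.exp th * c n / (Real.exp th * c n + 1)) * (t - th) =
        ∑ n ∈ M.erase m, Real.exp th * c n / (Real.exp th * c n + 1) * (t - th) := by
      rw [Finset.sum_mul]
    rw [Finset.sum_sub_distrib] at hB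
    show (1/2) * Real.log (Real.exp th * c0 m) +
      (1/2) * ∑ n ∈ M.erase m, Real.log (Real.exp th * c n + 1) +
      (1/2 + (1/2) * ∑ n ∈ M.erase m, Real.exp th * c n / (Real.exp th * c n + 1)) * (t - th) ≤ _
    show _ ≤ (1/2) * Real.log (Real.exp t * c0 m) +
      (1/2) * ∑ n ∈ M.erase m, Real.log (Real.exp t * c n + 1)
    nlinarith [hB, hB', hA]
  -- Jensen step
  set S := ∑ m ∈ M, Real.exp (g m th) with hS
  have hS0 : 0 < S := hSpos th
  set w := fun m : ι => Real.exp (g m th) / S with hw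
  have hw0 : ∀ m ∈ M, 0 ≤ w m := fun m _ => by positivity
  have hw1 : ∑ m ∈ M, w m = 1 := by
    rw [hw]; rw [← Finset.sum_div]; exact div_self hS0.ne'
  have hJ := aux_jensen_exp M w (fun m => G m * (t - th)) hw0 hw1
  have hsplit : ∀ x : ι → ℝ, ∑ m ∈ M, w m * x m =
      (∑ m ∈ M, Real.exp (g m th) * x m) / S := by
    intro x
    rw [Finset.sum_div]
    exact Finset.sum_congr rfl fun m _ => by rw [hw]; ring
  have harg : ∑ m ∈ M, w m * (G m * (t - th)) = D * (t - th) := by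
    rw [hsplit (fun m => G m * (t - th))]
    have h9 : ∑ m ∈ M, Real.exp (g m th) * (G m * (t - th)) =
        (∑ m ∈ M, Real.exp (g m th) * G m) * (t - th) := by
      rw [Finset.sum_mul]
      exact Finset.sum_congr rfl fun m _ => by ring
    rw [h9]
    show _ = (∑ m ∈ M, Real.exp (g m th) * G m) / S * (t - th)
    ring
  have hrhs := hsplit (fun m => Real.exp (G m * (t - th)))
  rw [harg, hrhs] at hJ
  have hchain : ∑ m ∈ M, Real.exp (g m th) * Real.exp (G m * (t - th)) ≤
      ∑ m ∈ M, Real.exp (g m t) := by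
    refine Finset.sum_le_sum fun m hm => ?_
    rw [← Real.exp_add]
    exact Real.exp_le_exp.2 (hterm m hm)
  have hfinal : S * Real.exp (D * (t - th)) ≤ ∑ m ∈ M, Real.exp (g m t) := by
    calc S * Real.exp (D * (t - th)) ≤
        S * ((∑ m ∈ M, Real.exp (g m th) * Real.exp (G m * (t - th))) / S) :=
          mul_le_mul_of_nonneg_left hJ hS0.le
      _ = ∑ m ∈ M, Real.exp (g m th) * Real.exp (G m * (t - th)) := by
          rw [mul_div_assoc']; exact mul_div_cancel_left₀ _ hS0.ne'
      _ ≤ ∑ m ∈ M, Real.exp (g m t) := hchain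
  have := Real.log_le_log (by positivity) hfinal
  rwa [Real.log_mul hS0.ne' (Real.exp_ne_zero _), Real.log_exp] at this

/-- Best local monomial lower bound of the FZF SINR numerator posynomial
`ϖ(p_k)² Π_{j≠k} ϑ_j(p_j)²` at the point `(p̂_j)`, with equality at `p = p̂`. -/
theorem fzf_numerator_monomial_lower_bound {ι κ : Type*} [DecidableEq ι] [DecidableEq κ] (M : Finset ι) (hM : M.Nonempty)
    (K : ℝ) (hK : 0 < K)
    (J : Finset κ) (k : κ) (hk : k ∈ J)
    (β : ι → κ → ℝ) (hβ : ∀ m ∈ M, ∀ j ∈ J, 0 < β m j)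
    (ph : κ → ℝ) (hph : ∀ j ∈ J, 0 < ph j) :
    let ϖ := fun q : ℝ => ∑ m ∈ M, Real.sqrt (K * q * (β m k) ^ 2) *
      ∏ n ∈ M.erase m, Real.sqrt (K * q * β n k + 1)
    let ϑ := fun (j : κ) (q : ℝ) => ∏ m ∈ M, Real.sqrt (K * q * β m j + 1)
    let b := fun j : κ =>
      if j = k then 2 * deriv (fun t : ℝ => Real.log (ϖ (Real.exp t))) (Real.log (ph k))
      else ∑ m ∈ M, K * β m j * ph j / (K * β m j * ph j + 1)
    let d := Real.log ((ϖ (ph k)) ^ 2 * ∏ j ∈ J.erase k, (ϑ j (ph j)) ^ 2) -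
      ∑ j ∈ J, b j * Real.log (ph j)
    (∀ p : κ → ℝ, (∀ j ∈ J, 0 < p j) →
        Real.exp d * ∏ j ∈ J, (p j) ^ (b j) ≤
          (ϖ (p k)) ^ 2 * ∏ j ∈ J.erase k, (ϑ j (p j)) ^ 2) ∧
      Real.exp d * ∏ j ∈ J, (ph j) ^ (b j) =
        (ϖ (ph k)) ^ 2 * ∏ j ∈ J.erase k, (ϑ j (ph j)) ^ 2 := by
  intro ϖ ϑ b d
  have hϖ : ∀ q : ℝ, ϖ q = ∑ m ∈ M, Real.sqrt (K * q * (β m k) ^ 2) *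
      ∏ n ∈ M.erase m, Real.sqrt (K * q * β n k + 1) := fun q => rfl
  have hϑ : ∀ (j : κ) (q : ℝ), ϑ j q = ∏ m ∈ M, Real.sqrt (K * q * β m j + 1) :=
    fun j q => rfl
  have hbk : b k = 2 * deriv (fun t : ℝ => Real.log (ϖ (Real.exp t))) (Real.log (ph k)) :=
    if_pos rfl
  have hbj : ∀ j : κ, j ≠ k → b j = ∑ m ∈ M, K * β m j * ph j / (K * β m j * ph j + 1) :=
    fun j h => if_neg h
  have hd : d = Real.log ((ϖ (ph k)) ^ 2 * ∏ j ∈ J.erase k, (ϑ j (ph j)) ^ 2) -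
      ∑ j ∈ J, b j * Real.log (ph j) := rfl
  have hphk : 0 < ph k := hph k hk
  set th := Real.log (ph k) with hth
  have hexpth : Real.exp th = ph k := Real.exp_log hphk
  -- positivity of ϖ and ϑ
  have hϖpos : ∀ q : ℝ, 0 < q → 0 < ϖ q := by
    intro q hq
    rw [hϖ]
    refine Finset.sum_pos (fun m hm => ?_) hM
    have hb := hβ m hm k hk
    refine mul_pos (Real.sqrt_pos.2 (by positivity)) (Finset.prod_pos fun n hn => ?_)
    have hbn := hβ n (Finset.mem_of_mem_erase hn) k hk
    exact Real.sqrt_pos.2 (by positivity)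
  have hϑpos : ∀ j ∈ J, ∀ q : ℝ, 0 < q → 0 < ϑ j q := by
    intro j hj q hq
    rw [hϑ]
    refine Finset.prod_pos fun m hm => ?_
    have hb := hβ m hm j hj
    exact Real.sqrt_pos.2 (by positivity)
  -- the log-sum-exp representation of ϖ ∘ exp
  set gf : ι → ℝ → ℝ := fun m t => (1/2) * Real.log (Real.exp t * (K * β m k ^ 2)) +
      (1/2) * ∑ n ∈ M.erase m, Real.log (Real.exp t * (K * β n k) + 1) with hgf
  set Gv : ι → ℝ := fun m => 1/2 + (1/2) * ∑ n ∈ M.erase m,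
      Real.exp th * (K * β n k) / (Real.exp th * (K * β n k) + 1) with hGv
  set Dv : ℝ := (∑ m ∈ M, Real.exp (gf m th) * Gv m) / (∑ m ∈ M, Real.exp (gf m th)) with hDv
  have hc0 : ∀ m ∈ M, 0 < K * β m k ^ 2 := fun m hm => by
    have := hβ m hm k hk; positivity
  have hcc : ∀ n ∈ M, 0 < K * β n k := fun n hn => by
    have := hβ n hn k hk; positivity
  have key := aux_logsum_tangent M hM (fun m => K * β m k ^ 2) (fun n => K * β n k) hc0 hcc th
  have hD : HasDerivAt (fun t => Real.log (∑ m ∈ M, Real.exp (gf m t))) Dv th := key.1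
  have htan : ∀ t : ℝ, Real.log (∑ m ∈ M, Real.exp (gf m th)) + Dv * (t - th) ≤
      Real.log (∑ m ∈ M, Real.exp (gf m t)) := key.2
  have hrepr : ∀ t : ℝ, ϖ (Real.exp t) = ∑ m ∈ M, Real.exp (gf m t) := by
    intro t
    rw [hϖ]
    refine Finset.sum_congr rfl fun m hm => ?_
    have hbm := hβ m hm k hk
    rw [hgf]
    show Real.sqrt (K * Real.exp t * β m k ^ 2) * ∏ n ∈ M.erase m, Real.sqrt (K * Real.exp t * β n k + 1)
      = Real.exp ((1/2) * Real.log (Real.exp t * (K * β m k ^ 2)) +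
        (1/2) * ∑ n ∈ M.erase m, Real.log (Real.exp t * (K * β n k) + 1))
    rw [Real.exp_add, Finset.mul_sum, Real.exp_sum]
    congr 1
    · rw [← aux_sqrt_exp (by positivity)]
      congr 1
      ring
    · refine Finset.prod_congr rfl fun n hn => ?_
      have hbn := hβ n (Finset.mem_of_mem_erase hn) k hk
      rw [← aux_sqrt_exp (by positivity)]
      congr 1
      ring
  have hlogϖ : ∀ q : ℝ, 0 < q →
      Real.log (ϖ q) = Real.log (∑ m ∈ M, Real.exp (gf m (Real.log q))) := by
    intro q hq
    rw [← hrepr, Real.exp_log hq]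
  have hderiv : deriv (fun t : ℝ => Real.log (ϖ (Real.exp t))) th = Dv := by
    have hfe : (fun t : ℝ => Real.log (ϖ (Real.exp t))) =
        fun t => Real.log (∑ m ∈ M, Real.exp (gf m t)) := funext fun t => by rw [hrepr]
    rw [hfe]
    exact hD.deriv
  have hbk2 : b k = 2 * Dv := by rw [hbk, hderiv]
  -- k-part tangent bound
  have hk_term : ∀ x : ℝ, 0 < x → b k * Real.log x - b k * th ≤
      2 * Real.log (ϖ x) - 2 * Real.log (ϖ (ph k)) := by
    intro x hx
    have h := htan (Real.log x)
    rw [← hlogϖ x hx] at h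
    have h2 : Real.log (∑ m ∈ M, Real.exp (gf m th)) = Real.log (ϖ (ph k)) := by
      rw [hlogϖ _ hphk, ← hth]
    rw [h2] at h
    rw [hbk2]
    nlinarith [h]
  -- j-part tangent bound
  have hj_term : ∀ j ∈ J.erase k, ∀ x : ℝ, 0 < x →
      b j * Real.log x - b j * Real.log (ph j) ≤
        (∑ m ∈ M, Real.log (K * x * β m j + 1)) -
          (∑ m ∈ M, Real.log (K * ph j * β m j + 1)) := by
    intro j hj x hx
    have hjJ := Finset.mem_of_mem_erase hj
    have hjne := Finset.ne_of_mem_erase hj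
    rw [← mul_sub, hbj j hjne, Finset.sum_mul, ← Finset.sum_sub_distrib]
    refine Finset.sum_le_sum fun m hm => ?_
    have hbm := hβ m hm j hjJ
    have h := aux_tangent (a := K * β m j) (by positivity) hx (hph j hjJ)
    have e1 : K * x * β m j = K * β m j * x := by ring
    have e2 : K * ph j * β m j = K * β m j * ph j := by ring
    rw [e1, e2]
    exact h
  -- 2 log ϑ as a sum
  have hlogϑ : ∀ j ∈ J, ∀ x : ℝ, 0 < x →
      2 * Real.log (ϑ j x) = ∑ m ∈ M, Real.log (K * x * β m j + 1) := by
    intro j hj x hx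
    rw [hϑ, Real.log_prod (fun m hm => by
      have := hβ m hm j hj
      exact (Real.sqrt_pos.2 (by positivity)).ne'), Finset.mul_sum]
    refine Finset.sum_congr rfl fun m hm => ?_
    have := hβ m hm j hj
    rw [Real.log_sqrt (by positivity)]
    ring
  -- log of the RHS
  have hRHSpos : ∀ p : κ → ℝ, (∀ j ∈ J, 0 < p j) →
      0 < (ϖ (p k)) ^ 2 * ∏ j ∈ J.erase k, (ϑ j (p j)) ^ 2 := by
    intro p hp
    refine mul_pos (pow_pos (hϖpos _ (hp k hk)) 2) (Finset.prod_pos fun j hj => ?_)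
    exact pow_pos (hϑpos j (Finset.mem_of_mem_erase hj) _ (hp j (Finset.mem_of_mem_erase hj))) 2
  have hlogRHS : ∀ p : κ → ℝ, (∀ j ∈ J, 0 < p j) →
      Real.log ((ϖ (p k)) ^ 2 * ∏ j ∈ J.erase k, (ϑ j (p j)) ^ 2) =
        2 * Real.log (ϖ (p k)) + ∑ j ∈ J.erase k, 2 * Real.log (ϑ j (p j)) := by
    intro p hp
    have h1 : 0 < ϖ (p k) := hϖpos _ (hp k hk)
    have h2 : ∀ j ∈ J.erase k, 0 < ϑ j (p j) := fun j hj =>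
      hϑpos j (Finset.mem_of_mem_erase hj) _ (hp j (Finset.mem_of_mem_erase hj))
    rw [Real.log_mul (by positivity) (Finset.prod_pos fun j hj => pow_pos (h2 j hj) 2).ne',
      Real.log_pow, Real.log_prod (fun j hj => (pow_pos (h2 j hj) 2).ne')]
    push_cast
    congr 1
    refine Finset.sum_congr rfl fun j hj => ?_
    rw [Real.log_pow]
    push_cast
    ring
  -- LHS as a single exponential
  have hLHS : ∀ p : κ → ℝ, (∀ j ∈ J, 0 < p j) →
      Real.exp d * ∏ j ∈ J, (p j) ^ (b j) =
        Real.exp (d + ∑ j ∈ J, b j * Real.log (p j)) := by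
    intro p hp
    rw [Real.exp_add]
    congr 1
    rw [Real.exp_sum]
    refine Finset.prod_congr rfl fun j hj => ?_
    rw [Real.rpow_def_of_pos (hp j hj), mul_comm]
  constructor
  · -- inequality
    intro p hp
    rw [hLHS p hp, ← Real.exp_log (hRHSpos p hp)]
    apply Real.exp_le_exp.2
    rw [hd]
    have hsum := Finset.sum_le_sum (fun j hj => hj_term j hj (p j)
      (hp j (Finset.mem_of_mem_erase hj)))
    simp only [Finset.sum_sub_distrib] at hsum
    have hkt := hk_term (p k) (hp k hk)
    have hsplit1 : ∑ j ∈ J, b j * Real.log (p j) =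
        b k * Real.log (p k) + ∑ j ∈ J.erase k, b j * Real.log (p j) :=
      (Finset.add_sum_erase J _ hk).symm
    have hsplit2 : ∑ j ∈ J, b j * Real.log (ph j) =
        b k * Real.log (ph k) + ∑ j ∈ J.erase k, b j * Real.log (ph j) :=
      (Finset.add_sum_erase J _ hk).symm
    rw [hlogRHS p hp, hlogRHS ph hph, hsplit1, hsplit2]
    have he1 : ∑ j ∈ J.erase k, 2 * Real.log (ϑ j (p j)) =
        ∑ j ∈ J.erase k, ∑ m ∈ M, Real.log (K * p j * β m j + 1) :=
      Finset.sum_congr rfl fun j hj => hlogϑ j (Finset.mem_of_mem_erase hj) _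
        (hp j (Finset.mem_of_mem_erase hj))
    have he2 : ∑ j ∈ J.erase k, 2 * Real.log (ϑ j (ph j)) =
        ∑ j ∈ J.erase k, ∑ m ∈ M, Real.log (K * ph j * β m j + 1) :=
      Finset.sum_congr rfl fun j hj => hlogϑ j (Finset.mem_of_mem_erase hj) _
        (hph j (Finset.mem_of_mem_erase hj))
    rw [he1, he2]
    linarith [hsum, hkt]
  · -- equality at p = ph
    rw [hLHS ph hph, hd]
    have : Real.log ((ϖ (ph k)) ^ 2 * ∏ j ∈ J.erase k, (ϑ j (ph j)) ^ 2) -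
        ∑ j ∈ J, b j * Real.log (ph j) + ∑ j ∈ J, b j * Real.log (ph j) =
        Real.log ((ϖ (ph k)) ^ 2 * ∏ j ∈ J.erase k, (ϑ j (ph j)) ^ 2) := by ring
    rw [this]
    exact Real.exp_log (hRHSpos ph hph)
end

section
/- Let M be a nonempty finite index set, K > 0 a real constant, and for each m ∈ M let β_m > 0. Then the function x ↦ ln(K·e^x) + 2·ln(Σ_{m∈M} β_m·Π_{n∈M, n≠m} √(K·β_n·e^x + 1)) is convex on ℝ; that is, the logarithm of ϖ(p)² = (Σ_{m∈M} √(K·p·β_m²)·Π_{n∈M, n≠m} √(K·p·β_n + 1))² is a convex function of x = ln(p). -/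
/-- Hölder inequality in the weighted-geometric-mean form. -/
private lemma holder_sum {ι : Type*} (M : Finset ι) (u v : ι → ℝ)
    (hu : ∀ i ∈ M, 0 ≤ u i) (hv : ∀ i ∈ M, 0 ≤ v i)
    {a b : ℝ} (ha : 0 < a) (hb : 0 < b) (hab : a + b = 1) :
    ∑ i ∈ M, u i ^ a * v i ^ b ≤ (∑ i ∈ M, u i) ^ a * (∑ i ∈ M, v i) ^ b := by
  have hpq : Real.HolderConjugate (1 / a) (1 / b) := Real.holderConjugate_one_div ha hb hab
  have h := Real.inner_le_Lp_mul_Lq M (fun i => u i ^ a) (fun i => v i ^ b) hpq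
  have h1 : ∀ i ∈ M, |u i ^ a| ^ (1 / a) = u i := by
    intro i hi
    rw [abs_of_nonneg (Real.rpow_nonneg (hu i hi) a), one_div,
      ← Real.rpow_mul (hu i hi), mul_inv_cancel₀ ha.ne', Real.rpow_one]
  have h2 : ∀ i ∈ M, |v i ^ b| ^ (1 / b) = v i := by
    intro i hi
    rw [abs_of_nonneg (Real.rpow_nonneg (hv i hi) b), one_div,
      ← Real.rpow_mul (hv i hi), mul_inv_cancel₀ hb.ne', Real.rpow_one]
  rw [Finset.sum_congr rfl h1, Finset.sum_congr rfl h2, one_div_one_div, one_div_one_div] at h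
  exact h

/-- Log-convexity of `t ↦ c t + 1` type expressions: two-point Hölder. -/
private lemma rpow_mul_rpow_add_one_le {u v : ℝ} (hu : 0 ≤ u) (hv : 0 ≤ v)
    {a b : ℝ} (ha : 0 < a) (hb : 0 < b) (hab : a + b = 1) :
    u ^ a * v ^ b + 1 ≤ (u + 1) ^ a * (v + 1) ^ b := by
  have h := holder_sum (Finset.range 2) (fun i => if i = 0 then u else 1)
    (fun i => if i = 0 then v else 1)
    (by intro i _; split <;> norm_num [hu])
    (by intro i _; split <;> norm_num [hv]) ha hb hab
  simpa [Finset.sum_range_succ, Real.one_rpow] using h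

/-- `x ↦ ln(K eˣ) + 2 ln(Σ_m β_m Π_{n≠m} √(K β_n eˣ + 1)) = ln(ϖ(eˣ)²)` is convex on `ℝ`. -/
theorem log_varpi_sq_exp_convexOn {ι : Type*} [DecidableEq ι] (M : Finset ι) (hM : M.Nonempty)
    (K : ℝ) (hK : 0 < K) (β : ι → ℝ) (hβ : ∀ m ∈ M, 0 < β m) :
    ConvexOn ℝ Set.univ (fun x : ℝ =>
      Real.log (K * Real.exp x) +
        2 * Real.log (∑ m ∈ M, β m *
          ∏ n ∈ M.erase m, Real.sqrt (K * β n * Real.exp x + 1))) := by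
  -- notation
  set S : ℝ → ℝ := fun x => ∑ m ∈ M, β m *
      ∏ n ∈ M.erase m, Real.sqrt (K * β n * Real.exp x + 1) with hS
  have hfac_pos : ∀ x : ℝ, ∀ n ∈ M, 0 < Real.sqrt (K * β n * Real.exp x + 1) := by
    intro x n hn
    apply Real.sqrt_pos.2
    have := (hβ n hn)
    positivity
  have hSpos : ∀ x : ℝ, 0 < S x := by
    intro x
    apply Finset.sum_pos
    · intro m hm
      exact mul_pos (hβ m hm) (Finset.prod_pos fun n hn =>
        hfac_pos x n (Finset.mem_of_mem_erase hn))
    · exact hM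
  constructor
  · exact convex_univ
  intro x _ y _ a b ha hb hab
  rcases eq_or_lt_of_le ha with ha0 | ha
  · have hb1 : b = 1 := by linarith
    simp [← ha0, hb1]
  rcases eq_or_lt_of_le hb with hb0 | hb
  · have ha1 : a = 1 := by linarith
    simp [← hb0, ha1]
  -- main case: 0 < a, 0 < b
  -- key inequality: S (a x + b y) ≤ S x ^ a * S y ^ b
  have key : S (a * x + b * y) ≤ S x ^ a * S y ^ b := by
    have hterm : ∀ m ∈ M,
        β m * ∏ n ∈ M.erase m, Real.sqrt (K * β n * Real.exp (a * x + b * y) + 1) ≤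
        (β m * ∏ n ∈ M.erase m, Real.sqrt (K * β n * Real.exp x + 1)) ^ a *
        (β m * ∏ n ∈ M.erase m, Real.sqrt (K * β n * Real.exp y + 1)) ^ b := by
      intro m hm
      have hβm := hβ m hm
      have hprod_le : ∏ n ∈ M.erase m, Real.sqrt (K * β n * Real.exp (a * x + b * y) + 1) ≤
          ∏ n ∈ M.erase m, (Real.sqrt (K * β n * Real.exp x + 1) ^ a *
            Real.sqrt (K * β n * Real.exp y + 1) ^ b) := by
        apply Finset.prod_le_prod
        · intro n hn; exact (hfac_pos _ n (Finset.mem_of_mem_erase hn)).le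
        · intro n hn
          have hβn := hβ n (Finset.mem_of_mem_erase hn)
          have hcx : 0 ≤ K * β n * Real.exp x := by positivity
          have hcy : 0 ≤ K * β n * Real.exp y := by positivity
          have hinner : K * β n * Real.exp (a * x + b * y) + 1 ≤
              (K * β n * Real.exp x + 1) ^ a * (K * β n * Real.exp y + 1) ^ b := by
            have hgeo : K * β n * Real.exp (a * x + b * y) =
                (K * β n * Real.exp x) ^ a * (K * β n * Real.exp y) ^ b := by
              rw [Real.mul_rpow (by positivity) (Real.exp_nonneg x),
                Real.mul_rpow (by positivity) (Real.exp_nonneg y),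
                ← Real.exp_mul, ← Real.exp_mul]
              have hc : (K * β n) ^ a * (K * β n) ^ b = K * β n := by
                rw [← Real.rpow_add (by positivity : (0:ℝ) < K * β n), hab, Real.rpow_one]
              calc K * β n * Real.exp (a * x + b * y)
                  = ((K * β n) ^ a * (K * β n) ^ b) * (Real.exp (x * a) * Real.exp (y * b)) := by
                    rw [hc, ← Real.exp_add]; ring_nf
                _ = (K * β n) ^ a * Real.exp (x * a) * ((K * β n) ^ b * Real.exp (y * b)) := by
                    ring
            rw [hgeo]
            exact rpow_mul_rpow_add_one_le hcx hcy ha hb hab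
          calc Real.sqrt (K * β n * Real.exp (a * x + b * y) + 1)
              ≤ Real.sqrt ((K * β n * Real.exp x + 1) ^ a * (K * β n * Real.exp y + 1) ^ b) :=
                Real.sqrt_le_sqrt hinner
            _ = Real.sqrt (K * β n * Real.exp x + 1) ^ a *
                Real.sqrt (K * β n * Real.exp y + 1) ^ b := by
                rw [Real.sqrt_mul (Real.rpow_nonneg (by positivity) a),
                  Real.sqrt_eq_rpow, Real.sqrt_eq_rpow, Real.sqrt_eq_rpow, Real.sqrt_eq_rpow,
                  ← Real.rpow_mul (by positivity), ← Real.rpow_mul (by positivity),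
                  ← Real.rpow_mul (by positivity), ← Real.rpow_mul (by positivity),
                  mul_comm a _, mul_comm b _]
      calc β m * ∏ n ∈ M.erase m, Real.sqrt (K * β n * Real.exp (a * x + b * y) + 1)
          ≤ β m * ∏ n ∈ M.erase m, (Real.sqrt (K * β n * Real.exp x + 1) ^ a *
              Real.sqrt (K * β n * Real.exp y + 1) ^ b) :=
            mul_le_mul_of_nonneg_left hprod_le hβm.le
        _ = (β m * ∏ n ∈ M.erase m, Real.sqrt (K * β n * Real.exp x + 1)) ^ a *
            (β m * ∏ n ∈ M.erase m, Real.sqrt (K * β n * Real.exp y + 1)) ^ b := by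
            rw [Finset.prod_mul_distrib,
              Real.mul_rpow hβm.le (Finset.prod_nonneg fun n hn =>
                (hfac_pos x n (Finset.mem_of_mem_erase hn)).le),
              Real.mul_rpow hβm.le (Finset.prod_nonneg fun n hn =>
                (hfac_pos y n (Finset.mem_of_mem_erase hn)).le),
              ← Real.finset_prod_rpow _ _ (fun n hn =>
                (hfac_pos x n (Finset.mem_of_mem_erase hn)).le),
              ← Real.finset_prod_rpow _ _ (fun n hn =>
                (hfac_pos y n (Finset.mem_of_mem_erase hn)).le)]
            have hββ : β m ^ a * β m ^ b = β m := by
              rw [← Real.rpow_add hβm, hab, Real.rpow_one]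
            calc β m * ((∏ n ∈ M.erase m, Real.sqrt (K * β n * Real.exp x + 1) ^ a) *
                   (∏ n ∈ M.erase m, Real.sqrt (K * β n * Real.exp y + 1) ^ b))
                = (β m ^ a * β m ^ b) *
                  ((∏ n ∈ M.erase m, Real.sqrt (K * β n * Real.exp x + 1) ^ a) *
                   (∏ n ∈ M.erase m, Real.sqrt (K * β n * Real.exp y + 1) ^ b)) := by
                  rw [hββ]
              _ = β m ^ a * (∏ n ∈ M.erase m, Real.sqrt (K * β n * Real.exp x + 1) ^ a) *
                  (β m ^ b * ∏ n ∈ M.erase m, Real.sqrt (K * β n * Real.exp y + 1) ^ b) := by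
                  ring
    calc S (a * x + b * y)
        ≤ ∑ m ∈ M, ((β m * ∏ n ∈ M.erase m, Real.sqrt (K * β n * Real.exp x + 1)) ^ a *
            (β m * ∏ n ∈ M.erase m, Real.sqrt (K * β n * Real.exp y + 1)) ^ b) :=
          Finset.sum_le_sum hterm
      _ ≤ S x ^ a * S y ^ b := by
          apply holder_sum
          · intro m hm
            exact mul_nonneg (hβ m hm).le (Finset.prod_nonneg fun n hn =>
              (hfac_pos x n (Finset.mem_of_mem_erase hn)).le)
          · intro m hm
            exact mul_nonneg (hβ m hm).le (Finset.prod_nonneg fun n hn =>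
              (hfac_pos y n (Finset.mem_of_mem_erase hn)).le)
          · exact ha
          · exact hb
          · exact hab
  -- conclude
  simp only [smul_eq_mul]
  have hlogS : Real.log (S (a * x + b * y)) ≤ a * Real.log (S x) + b * Real.log (S y) := by
    calc Real.log (S (a * x + b * y)) ≤ Real.log (S x ^ a * S y ^ b) :=
          Real.log_le_log (hSpos _) key
      _ = a * Real.log (S x) + b * Real.log (S y) := by
          rw [Real.log_mul (Real.rpow_pos_of_pos (hSpos x) a).ne'
            (Real.rpow_pos_of_pos (hSpos y) b).ne',
            Real.log_rpow (hSpos x), Real.log_rpow (hSpos y)]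
  have hlin : Real.log (K * Real.exp (a * x + b * y)) =
      a * Real.log (K * Real.exp x) + b * Real.log (K * Real.exp y) := by
    rw [Real.log_mul hK.ne' (Real.exp_ne_zero _), Real.log_mul hK.ne' (Real.exp_ne_zero _),
      Real.log_mul hK.ne' (Real.exp_ne_zero _), Real.log_exp, Real.log_exp, Real.log_exp]
    have : a * Real.log K + b * Real.log K = Real.log K := by
      rw [← add_mul, hab, one_mul]
    linarith [this]
  calc Real.log (K * Real.exp (a * x + b * y)) + 2 * Real.log (S (a * x + b * y))
      ≤ (a * Real.log (K * Real.exp x) + b * Real.log (K * Real.exp y)) +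
        2 * (a * Real.log (S x) + b * Real.log (S y)) := by
        rw [hlin]; linarith [hlogS]
    _ = a * (Real.log (K * Real.exp x) + 2 * Real.log (S x)) +
        b * (Real.log (K * Real.exp y) + 2 * Real.log (S y)) := by ring
end
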